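/- arXiv:2404.16800 — 6 statements merged into one kernel-verified Lean document; each statement's English description precedes it below -/
import Mathlib

section
/- For α < 1/2 and a_n = Γ(n)Γ(α+1)/Γ(n+α), the sums v_n = ∑_{k=1}^n a_k^2 satisfy v_n / n^{1−2α} → Γ(α+1)^2 / (1 − 2α) as n → ∞. -/
open Filter

open Asymptotics Topology

lemma aux_rpow_ratio (q : ℝ) :
    Tendsto (fun n : ℕ => ((n : ℝ) + 1) ^ q / (n : ℝ) ^ q) atTop (𝓝 1) := by
  have h1 : Tendsto (fun n : ℕ => ((n : ℝ) + 1) / n) atTop (𝓝 1) := by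
    have := (tendsto_natCast_atTop_atTop (R := ℝ)).inv_tendsto_atTop
    have h2 : Tendsto (fun n : ℕ => 1 + ((n : ℝ))⁻¹) atTop (𝓝 (1 + 0)) :=
      tendsto_const_nhds.add this
    rw [add_zero] at h2
    refine h2.congr' ?_
    filter_upwards [eventually_gt_atTop 0] with n hn
    have : (n : ℝ) ≠ 0 := Nat.cast_ne_zero.mpr hn.ne'
    field_simp
  have hc : ContinuousAt (fun x : ℝ => x ^ q) 1 :=
    Real.continuousAt_rpow_const 1 q (Or.inl one_ne_zero)
  have := (hc.tendsto.comp h1)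
  rw [Real.one_rpow] at this
  refine this.congr' ?_
  filter_upwards [eventually_gt_atTop 0] with n hn
  have hn' : (0 : ℝ) < n := Nat.cast_pos.mpr hn
  simp only [Function.comp]
  rw [Real.div_rpow (by positivity) hn'.le]

lemma aux_inv_rpow (q : ℝ) (hq : 0 < q) :
    Tendsto (fun n : ℕ => ((n : ℝ) ^ q)⁻¹) atTop (𝓝 0) :=
  ((tendsto_rpow_atTop hq).comp tendsto_natCast_atTop_atTop).inv_tendsto_atTop

lemma sum_Icc_eq_range (g : ℕ → ℝ) (n : ℕ) :
    ∑ k ∈ Finset.Icc 1 n, g k = ∑ i ∈ Finset.range n, g (i + 1) := by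
  rw [← Finset.Ico_add_one_right_eq_Icc, Finset.sum_Ico_eq_sum_range]
  simp [add_comm]

lemma sum_rpow_lower (p : ℝ) (hp : -1 < p) (n : ℕ) :
    ((n : ℝ) ^ (p + 1) - 1) / (p + 1) ≤ ∑ k ∈ Finset.Icc 1 n, (k : ℝ) ^ p := by
  have hp1 : (0 : ℝ) < p + 1 := by linarith
  rcases le_or_gt 0 p with hp0 | hp0
  · -- monotone case: ∫_0^n ≤ sum
    have hmono : MonotoneOn (fun x : ℝ => x ^ p) (Set.Icc ((0:ℕ):ℝ) ((n:ℕ):ℝ)) := by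
      intro x hx y _ hxy
      exact Real.rpow_le_rpow (by exact_mod_cast hx.1) hxy hp0
    have h := hmono.integral_le_sum_Ico (Nat.zero_le n)
    have hI : (∫ x in ((0:ℕ):ℝ)..((n:ℕ):ℝ), x ^ p) = (n : ℝ) ^ (p + 1) / (p + 1) := by
      rw [integral_rpow (Or.inl hp)]
      push_cast
      rw [Real.zero_rpow hp1.ne']
      ring
    rw [hI] at h
    calc ((n : ℝ) ^ (p + 1) - 1) / (p + 1) ≤ (n : ℝ) ^ (p + 1) / (p + 1) := by
          gcongr; linarith
      _ ≤ ∑ i ∈ Finset.Ico 0 n, ((i + 1 : ℕ) : ℝ) ^ p := h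
      _ = ∑ k ∈ Finset.Icc 1 n, (k : ℝ) ^ p := by
          rw [sum_Icc_eq_range (fun k => (k : ℝ) ^ p) n, Nat.Ico_zero_eq_range]
  · -- antitone case: ∫_1^{n+1} ≤ sum
    have hanti : AntitoneOn (fun x : ℝ => x ^ p) (Set.Icc ((1:ℕ):ℝ) ((n+1:ℕ):ℝ)) := by
      intro x hx y hy hxy
      have hx1 : (0:ℝ) < x := lt_of_lt_of_le zero_lt_one (by exact_mod_cast hx.1)
      exact Real.rpow_le_rpow_of_nonpos hx1 hxy hp0.le
    have h := hanti.integral_le_sum_Ico (by omega)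
    have hI : (∫ x in ((1:ℕ):ℝ)..((n+1:ℕ):ℝ), x ^ p)
        = (((n:ℝ) + 1) ^ (p + 1) - 1) / (p + 1) := by
      rw [integral_rpow (Or.inl hp)]
      push_cast
      rw [Real.one_rpow]
    rw [hI] at h
    rw [← Finset.Ico_add_one_right_eq_Icc]
    calc ((n : ℝ) ^ (p + 1) - 1) / (p + 1)
        ≤ (((n:ℝ) + 1) ^ (p + 1) - 1) / (p + 1) := by
          have hrp : (n:ℝ) ^ (p+1) ≤ ((n:ℝ)+1) ^ (p+1) :=
            Real.rpow_le_rpow (Nat.cast_nonneg n) (by linarith) hp1.le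
          exact (div_le_div_iff_of_pos_right hp1).mpr (by linarith)
      _ ≤ ∑ k ∈ Finset.Ico 1 (n + 1), (k : ℝ) ^ p := h

lemma sum_rpow_upper (p : ℝ) (hp : -1 < p) (n : ℕ) :
    ∑ k ∈ Finset.Icc 1 n, (k : ℝ) ^ p ≤ 1 + (((n:ℝ) + 1) ^ (p + 1) - 1) / (p + 1) := by
  have hp1 : (0 : ℝ) < p + 1 := by linarith
  have hI : (∫ x in ((1:ℕ):ℝ)..((n+1:ℕ):ℝ), x ^ p)
      = (((n:ℝ) + 1) ^ (p + 1) - 1) / (p + 1) := by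
    rw [integral_rpow (Or.inl hp)]
    push_cast
    rw [Real.one_rpow]
  rcases le_or_gt 0 p with hp0 | hp0
  · have hmono : MonotoneOn (fun x : ℝ => x ^ p) (Set.Icc ((1:ℕ):ℝ) ((n+1:ℕ):ℝ)) := by
      intro x hx y hy hxy
      have : (0:ℝ) ≤ x := le_trans zero_le_one (by exact_mod_cast hx.1)
      exact Real.rpow_le_rpow this hxy hp0
    have h := hmono.sum_le_integral_Ico (by omega)
    rw [hI] at h
    rw [← Finset.Ico_add_one_right_eq_Icc]
    linarith
  · have hanti : AntitoneOn (fun x : ℝ => x ^ p) (Set.Icc ((1:ℕ):ℝ) ((n+1:ℕ):ℝ)) := by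
      intro x hx y hy hxy
      have hx1 : (0:ℝ) < x := lt_of_lt_of_le zero_lt_one (by exact_mod_cast hx.1)
      exact Real.rpow_le_rpow_of_nonpos hx1 hxy hp0.le
    have h := hanti.sum_le_integral_Ico (show 1 ≤ n + 1 by omega)
    rw [hI] at h
    have hsubset : ∑ k ∈ Finset.Icc 1 n, (k : ℝ) ^ p
        ≤ ∑ k ∈ insert 1 (Finset.Icc 2 (n+1)), (k : ℝ) ^ p := by
      apply Finset.sum_le_sum_of_subset_of_nonneg
      · intro k hk
        simp only [Finset.mem_Icc] at hk
        simp only [Finset.mem_insert, Finset.mem_Icc]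
        omega
      · intro k _ _
        positivity
    rw [Finset.sum_insert (by simp)] at hsubset
    have hre : ∑ k ∈ Finset.Icc 2 (n+1), (k : ℝ) ^ p
        = ∑ i ∈ Finset.Ico 1 (n + 1), (((i + 1 : ℕ)) : ℝ) ^ p := by
      rw [← Finset.Ico_add_one_right_eq_Icc, Finset.sum_Ico_eq_sum_range, Finset.sum_Ico_eq_sum_range]
      simp only [show n + 1 + 1 - 2 = n from by omega, show n + 1 - 1 = n from by omega]
      apply Finset.sum_congr rfl
      intro j _
      norm_num
      ring_nf
    rw [hre] at hsubset
    have : ((1:ℕ):ℝ) ^ p = 1 := by norm_num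
    calc ∑ k ∈ Finset.Icc 1 n, (k : ℝ) ^ p
        ≤ ((1:ℕ):ℝ) ^ p + ∑ i ∈ Finset.Ico 1 (n + 1), (((i + 1 : ℕ)) : ℝ) ^ p := hsubset
      _ ≤ 1 + (((n:ℝ) + 1) ^ (p + 1) - 1) / (p + 1) := by
          rw [this]; linarith

lemma sum_rpow_tendsto (p : ℝ) (hp : -1 < p) :
    Tendsto (fun n : ℕ => (∑ k ∈ Finset.Icc 1 n, (k : ℝ) ^ p) / (n : ℝ) ^ (p + 1)) atTop
      (𝓝 (1 / (p + 1))) := by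
  have hp1 : (0 : ℝ) < p + 1 := by linarith
  have hlow : Tendsto (fun n : ℕ => (((n:ℝ) ^ (p+1) - 1) / (p+1)) / (n:ℝ) ^ (p+1)) atTop
      (𝓝 (1 / (p + 1))) := by
    have h := (tendsto_const_nhds (x := (1:ℝ)).sub (aux_inv_rpow (p+1) hp1)).div_const (p+1)
    rw [sub_zero] at h
    refine h.congr' ?_
    filter_upwards [eventually_gt_atTop 0] with n hn
    have hnp : (0:ℝ) < (n:ℝ) ^ (p+1) := Real.rpow_pos_of_pos (Nat.cast_pos.mpr hn) _
    field_simp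
  have hup : Tendsto (fun n : ℕ =>
      (1 + (((n:ℝ) + 1) ^ (p+1) - 1) / (p+1)) / (n:ℝ) ^ (p+1)) atTop (𝓝 (1 / (p + 1))) := by
    have h := (aux_inv_rpow (p+1) hp1).add
      (((aux_rpow_ratio (p+1)).sub (aux_inv_rpow (p+1) hp1)).div_const (p+1))
    rw [show (0:ℝ) + (1 - 0) / (p+1) = 1 / (p+1) by ring] at h
    refine h.congr' ?_
    filter_upwards [eventually_gt_atTop 0] with n hn
    have hnp : (0:ℝ) < (n:ℝ) ^ (p+1) := Real.rpow_pos_of_pos (Nat.cast_pos.mpr hn) _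
    field_simp
  refine tendsto_of_tendsto_of_tendsto_of_le_of_le' hlow hup ?_ ?_
  · filter_upwards [eventually_gt_atTop 0] with n hn
    have hnp : (0:ℝ) < (n:ℝ) ^ (p+1) := Real.rpow_pos_of_pos (Nat.cast_pos.mpr hn) _
    exact div_le_div_of_nonneg_right (sum_rpow_lower p hp n) hnp.le
  · filter_upwards [eventually_gt_atTop 0] with n hn
    have hnp : (0:ℝ) < (n:ℝ) ^ (p+1) := Real.rpow_pos_of_pos (Nat.cast_pos.mpr hn) _
    exact div_le_div_of_nonneg_right (sum_rpow_upper p hp n) hnp.le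

lemma weighted_sum_tendsto (p : ℝ) (hp : -1 < p) (b : ℕ → ℝ) (c : ℝ)
    (hb : Tendsto b atTop (𝓝 c)) :
    Tendsto (fun n : ℕ => (∑ k ∈ Finset.Icc 1 n, b k * (k : ℝ) ^ p) / (n : ℝ) ^ (p + 1)) atTop
      (𝓝 (c / (p + 1))) := by
  have hp1 : (0 : ℝ) < p + 1 := by linarith
  set S : ℕ → ℝ := fun n => ∑ k ∈ Finset.Icc 1 n, (k : ℝ) ^ p with hSdef
  have hS : Tendsto (fun n : ℕ => S n / (n:ℝ) ^ (p+1)) atTop (𝓝 (1 / (p+1))) :=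
    sum_rpow_tendsto p hp
  have hSpos : ∀ n : ℕ, 1 ≤ n → 0 < S n := by
    intro n hn
    apply Finset.sum_pos
    · intro k hk
      have : 0 < k := by simp only [Finset.mem_Icc] at hk; omega
      positivity
    · exact ⟨1, Finset.mem_Icc.mpr ⟨le_refl 1, hn⟩⟩
  have hStop : Tendsto S atTop atTop := by
    have hmul := Tendsto.pos_mul_atTop (by positivity : (0:ℝ) < 1/(p+1)) hS
      ((tendsto_rpow_atTop hp1).comp tendsto_natCast_atTop_atTop)
    refine hmul.congr' ?_
    filter_upwards [eventually_gt_atTop 0] with n hn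
    have hnp : (0:ℝ) < (n:ℝ) ^ (p+1) := Real.rpow_pos_of_pos (Nat.cast_pos.mpr hn) _
    simp only [Function.comp]
    field_simp
  set E : ℕ → ℝ := fun n => ∑ k ∈ Finset.Icc 1 n, (b k - c) * (k : ℝ) ^ p with hEdef
  have hlittle : E =o[atTop] S := by
    have h0 : Tendsto (fun i : ℕ => b (i + 1) - c) atTop (𝓝 0) := by
      have := hb.comp (tendsto_add_atTop_nat 1)
      exact tendsto_sub_nhds_zero_iff.mpr this
    have hfo : (fun i : ℕ => (b (i+1) - c) * ((i+1:ℕ) : ℝ) ^ p)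
        =o[atTop] (fun i : ℕ => ((i+1:ℕ) : ℝ) ^ p) := by
      have := ((isLittleO_one_iff ℝ).mpr h0).mul_isBigO
        (isBigO_refl (fun i : ℕ => ((i+1:ℕ) : ℝ) ^ p) atTop)
      simpa using this
    have hgnn : ∀ i : ℕ, 0 ≤ (((i+1:ℕ)) : ℝ) ^ p := fun i => by positivity
    have hgs : Tendsto (fun n => ∑ i ∈ Finset.range n, ((i+1:ℕ) : ℝ) ^ p) atTop atTop := by
      refine hStop.congr fun n => ?_
      rw [hSdef]
      exact sum_Icc_eq_range (fun k => (k : ℝ) ^ p) n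
    have := (hfo.sum_range hgnn) hgs
    refine this.congr' ?_ ?_
    · filter_upwards with n
      exact (sum_Icc_eq_range (fun k => (b k - c) * (k : ℝ) ^ p) n).symm
    · filter_upwards with n
      exact (sum_Icc_eq_range (fun k => (k : ℝ) ^ p) n).symm
  have hES : Tendsto (fun n => E n / S n) atTop (𝓝 0) := hlittle.tendsto_div_nhds_zero
  have hfinal := (tendsto_const_nhds (x := c)).mul hS |>.add (hES.mul hS)
  rw [show c * (1/(p+1)) + 0 * (1/(p+1)) = c / (p+1) by ring] at hfinal
  refine hfinal.congr' ?_
  filter_upwards [eventually_ge_atTop 1] with n hn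
  have hSn : S n ≠ 0 := (hSpos n hn).ne'
  have hsum : c * S n + E n = ∑ k ∈ Finset.Icc 1 n, b k * (k : ℝ) ^ p := by
    rw [hSdef, hEdef, Finset.mul_sum, ← Finset.sum_add_distrib]
    exact Finset.sum_congr rfl fun k _ => by ring
  have hX : ((n:ℝ) ^ (p+1)) ≠ 0 :=
    (Real.rpow_pos_of_pos (Nat.cast_pos.mpr hn) _).ne'
  rw [show c * (S n / (n:ℝ) ^ (p+1)) + E n / S n * (S n / (n:ℝ) ^ (p+1))
      = (c * S n + E n) / (n:ℝ) ^ (p+1) from by field_simp, hsum]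

lemma gamma_prod (α : ℝ) (hα1 : -1 < α) (hα0 : α ≠ 0) (n : ℕ) :
    Real.Gamma (α + (n + 1)) = Real.Gamma α * ∏ j ∈ Finset.range (n + 1), (α + j) := by
  induction n with
  | zero => simp [show α + ((0:ℕ)+1:ℕ) = α + 1 by push_cast; ring,
      Real.Gamma_add_one hα0, mul_comm]
  | succ n ih =>
    have hpos : (0:ℝ) < α + (n + 1) := by
      have : (0:ℝ) ≤ (n:ℝ) := Nat.cast_nonneg n
      linarith
    have h1 : α + ((n + 1 : ℕ) + 1) = (α + ((n:ℕ) + 1)) + 1 := by push_cast; ring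
    have h2 : (∏ j ∈ Finset.range (n + 1 + 1), (α + (j:ℝ)))
        = (∏ j ∈ Finset.range (n + 1), (α + (j:ℝ))) * (α + ((n+1:ℕ):ℝ)) :=
      Finset.prod_range_succ _ _
    rw [h1, Real.Gamma_add_one hpos.ne', ih, h2]
    push_cast
    ring

lemma gamma_ratio_tendsto (α : ℝ) (hα1 : -1 < α) (hα2 : α < 1/2) :
    Tendsto (fun n : ℕ =>
      Real.Gamma n * Real.Gamma (α + 1) / Real.Gamma ((n : ℝ) + α) * (n : ℝ) ^ α) atTop
      (𝓝 (Real.Gamma (α + 1))) := by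
  rcases eq_or_ne α 0 with rfl | hα0
  · refine tendsto_const_nhds.congr' ?_
    filter_upwards [eventually_gt_atTop 0] with n hn
    have h1 : Real.Gamma ((n:ℝ)) ≠ 0 :=
      (Real.Gamma_pos_of_pos (by exact_mod_cast hn)).ne'
    simp [Real.Gamma_one, h1]
  · -- α ≠ 0
    have hΓα : Real.Gamma α ≠ 0 := by
      apply Real.Gamma_ne_zero
      intro m
      rcases m with _ | m
      · simpa using hα0
      · push_cast
        intro h
        have : (0:ℝ) ≤ (m:ℝ) := Nat.cast_nonneg m
        rw [h] at hα1
        linarith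
    rw [← tendsto_add_atTop_iff_nat 1]
    have hlim : Tendsto (fun m : ℕ => α * Real.GammaSeq α m *
        (((m:ℝ) + 1) ^ α / (m:ℝ) ^ α)) atTop (𝓝 (Real.Gamma (α + 1))) := by
      have h1 := (tendsto_const_nhds (x := α)).mul (Real.GammaSeq_tendsto_Gamma α)
      have h2 := h1.mul (aux_rpow_ratio α)
      rw [mul_one] at h2
      rw [show α * Real.Gamma α = Real.Gamma (α + 1) from (Real.Gamma_add_one hα0).symm] at h2
      exact h2
    refine hlim.congr' ?_
    filter_upwards [eventually_ge_atTop 1] with m hm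
    have hm0 : (0:ℝ) < (m:ℝ) := by exact_mod_cast hm
    have hmα : (m:ℝ) ^ α ≠ 0 := (Real.rpow_pos_of_pos hm0 α).ne'
    have hP : (∏ j ∈ Finset.range (m + 1), (α + j)) ≠ 0 := by
      apply Finset.prod_ne_zero_iff.mpr
      intro j _
      rcases Nat.eq_zero_or_pos j with rfl | hj
      · simpa using hα0
      · have : (1:ℝ) ≤ (j:ℝ) := by exact_mod_cast hj
        intro hcon
        linarith
    have hΓn : Real.Gamma ((m + 1 : ℕ) : ℝ) = (Nat.factorial m : ℝ) := by
      push_cast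
      exact Real.Gamma_nat_eq_factorial m
    have hΓd : Real.Gamma (((m + 1 : ℕ) : ℝ) + α)
        = Real.Gamma α * ∏ j ∈ Finset.range (m + 1), (α + j) := by
      rw [show ((m + 1 : ℕ) : ℝ) + α = α + ((m:ℕ) + 1) by push_cast; ring]
      exact gamma_prod α hα1 hα0 m
    rw [Real.GammaSeq, hΓn, hΓd, Real.Gamma_add_one hα0]
    push_cast
    field_simp

/-- For `α < 1/2`, `v_n / n^{1−2α} → Γ(α+1)² / (1−2α)`. -/
theorem stmt_8 (α : ℝ) (hα : α ∈ Set.Ioo (-1 : ℝ) (1 / 2)) (a v : ℕ → ℝ)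
    (ha : ∀ n, a n = Real.Gamma n * Real.Gamma (α + 1) / Real.Gamma ((n : ℝ) + α))
    (hv : ∀ n, v n = ∑ k ∈ Finset.Icc 1 n, a k ^ 2) :
    Tendsto (fun n : ℕ => v n / (n : ℝ) ^ ((1 : ℝ) - 2 * α)) atTop
      (nhds (Real.Gamma (α + 1) ^ 2 / (1 - 2 * α))) := by
  obtain ⟨hα1, hα2⟩ := hα
  have hA : Tendsto (fun k : ℕ => a k * (k : ℝ) ^ α) atTop (𝓝 (Real.Gamma (α + 1))) :=
    (gamma_ratio_tendsto α hα1 hα2).congr fun n => by rw [ha n]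
  set b : ℕ → ℝ := fun k => a k ^ 2 * (k : ℝ) ^ (2 * α) with hbdef
  have hb : Tendsto b atTop (𝓝 (Real.Gamma (α + 1) ^ 2)) := by
    refine (hA.pow 2).congr' ?_
    filter_upwards [eventually_gt_atTop 0] with k hk
    have hk0 : (0 : ℝ) < (k : ℝ) := Nat.cast_pos.mpr hk
    have h2 : ((k : ℝ) ^ α) ^ (2 : ℕ) = (k : ℝ) ^ (2 * α) := by
      rw [← Real.rpow_natCast ((k : ℝ) ^ α) 2, ← Real.rpow_mul hk0.le]
      norm_num [mul_comm]
    rw [mul_pow, h2]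
  have hmain := weighted_sum_tendsto (-(2 * α)) (by linarith) b _ hb
  rw [show -(2 * α) + 1 = 1 - 2 * α by ring] at hmain
  refine hmain.congr' ?_
  filter_upwards with n
  rw [hv n]
  congr 1
  apply Finset.sum_congr rfl
  intro k hk
  have hk1 : 1 ≤ k := (Finset.mem_Icc.mp hk).1
  have hk0 : (0 : ℝ) < (k : ℝ) := by exact_mod_cast hk1
  rw [hbdef]
  dsimp only
  rw [mul_assoc, ← Real.rpow_add hk0]
  norm_num
end

section
/- For α = 1/2 and a_n = Γ(n)Γ(3/2)/Γ(n+1/2), the sums v_n = ∑_{k=1}^n a_k^2 satisfy v_n / log n → π/4 as n → ∞. -/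
open Filter Finset Real
local notation "W" => Real.Wallis.W

open Finset in
lemma stmt_9_aux_harmonic :
    Tendsto (fun n : ℕ => (∑ i ∈ range n, ((i : ℝ) + 1)⁻¹) - Real.log n) atTop
      (nhds Real.eulerMascheroniConstant) := by
  have h : ∀ n : ℕ, (∑ i ∈ range n, ((i : ℝ) + 1)⁻¹) = ((harmonic n : ℚ) : ℝ) := by
    intro n
    rw [harmonic]
    push_cast
    rfl
  simpa only [h] using Real.tendsto_harmonic_sub_log

/-- For `α = 1/2`, `v_n / log n → π/4`. -/
theorem stmt_9 (a v : ℕ → ℝ)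
    (ha : ∀ n, a n = Real.Gamma n * Real.Gamma (3 / 2) / Real.Gamma ((n : ℝ) + 1 / 2))
    (hv : ∀ n, v n = ∑ k ∈ Finset.Icc 1 n, a k ^ 2) :
    Tendsto (fun n : ℕ => v n / Real.log n) atTop (nhds (Real.pi / 4)) := by
  classical
  -- closed form for `a (n+1) ^ 2`
  have key : ∀ n : ℕ, a (n + 1) ^ 2 = W n / (2 * n + 1) := by
    intro n
    induction n with
    | zero =>
      have h1 : a 1 = 1 := by
        have := ha 1
        rw [show ((1 : ℕ) : ℝ) = 1 by norm_num] at this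
        rw [this, Real.Gamma_one]
        have h32 : (1 : ℝ) + 1 / 2 = 3 / 2 := by norm_num
        rw [h32, one_mul, div_self (Real.Gamma_pos_of_pos (by norm_num : (0:ℝ) < 3/2)).ne']
      simp [h1, Real.Wallis.W]
    | succ n ih =>
      have hc1 : ((n + 2 : ℕ) : ℝ) = (n : ℝ) + 2 := by push_cast; ring
      have hΓ1 : Real.Gamma ((n : ℝ) + 2) = ((n : ℝ) + 1) * Real.Gamma ((n : ℝ) + 1) := by
        have := Real.Gamma_add_one (s := (n : ℝ) + 1) (by positivity)
        rw [show (n : ℝ) + 1 + 1 = (n : ℝ) + 2 by ring] at this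
        exact this
      have hΓ2 : Real.Gamma ((n : ℝ) + 2 + 1 / 2)
          = ((n : ℝ) + 3 / 2) * Real.Gamma ((n : ℝ) + 1 + 1 / 2) := by
        have := Real.Gamma_add_one (s := (n : ℝ) + 3 / 2) (by positivity)
        rw [show (n : ℝ) + 3 / 2 + 1 = (n : ℝ) + 2 + 1 / 2 by ring,
          show (n : ℝ) + 3 / 2 = (n : ℝ) + 1 + 1 / 2 by ring] at this
        rw [this]
        ring
      have hstep : a (n + 2) = a (n + 1) * (((n : ℝ) + 1) / ((n : ℝ) + 3 / 2)) := by
        have e1 := ha (n + 2)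
        have e2 := ha (n + 1)
        rw [hc1] at e1
        rw [show ((n + 1 : ℕ) : ℝ) = (n : ℝ) + 1 by push_cast; ring] at e2
        rw [e1, e2, hΓ1, hΓ2]
        have hg : Real.Gamma ((n : ℝ) + 1 + 1 / 2) ≠ 0 :=
          (Real.Gamma_pos_of_pos (by positivity)).ne'
        field_simp
      have hW := Real.Wallis.W_succ n
      have hne1 : (2 * (n : ℝ) + 1) ≠ 0 := by positivity
      have hne2 : (2 * (n : ℝ) + 3) ≠ 0 := by positivity
      have hne3 : ((n : ℝ) + 3 / 2) ≠ 0 := by positivity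
      rw [show n + 1 + 1 = n + 2 from rfl] at *
      rw [hstep, mul_pow, ih, hW]
      have hc2 : ((n + 1 : ℕ) : ℝ) = (n : ℝ) + 1 := by push_cast; ring
      rw [hc2]
      field_simp
      ring
  -- the rescaled sequence tends to π/4
  have hb : Tendsto (fun n : ℕ => ((n : ℝ) + 1) * a (n + 1) ^ 2) atTop (nhds (π / 4)) := by
    have hW : Tendsto W atTop (nhds (π / 2)) := Real.Wallis.tendsto_W_nhds_pi_div_two
    have hr : Tendsto (fun n : ℕ => ((n : ℝ) + 1) / (2 * n + 1)) atTop (nhds (2⁻¹ : ℝ)) := by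
      have h1 : Tendsto (fun n : ℕ => ((n : ℝ))⁻¹) atTop (nhds 0) :=
        tendsto_inv_atTop_zero.comp tendsto_natCast_atTop_atTop
      have h2 : Tendsto (fun n : ℕ => (1 + ((n : ℝ))⁻¹) / (2 + ((n : ℝ))⁻¹)) atTop
          (nhds ((1 + 0) / (2 + 0))) :=
        ((tendsto_const_nhds.add h1).div (tendsto_const_nhds.add h1) (by norm_num))
      have h3 : (1 + (0:ℝ)) / (2 + 0) = 2⁻¹ := by norm_num
      rw [h3] at h2
      apply h2.congr'
      filter_upwards [eventually_gt_atTop 0] with n hn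
      have hn' : (0 : ℝ) < n := by exact_mod_cast hn
      field_simp
    have := hW.mul hr
    rw [show π / 2 * 2⁻¹ = π / 4 by ring] at this
    apply this.congr
    intro n
    rw [key n]
    have hne : (2 * (n : ℝ) + 1) ≠ 0 := by positivity
    field_simp
  -- harmonic sums
  set H : ℕ → ℝ := fun n => ∑ i ∈ range n, ((i : ℝ) + 1)⁻¹ with hHdef
  have hHpos : ∀ n : ℕ, 1 ≤ n → 0 < H n := by
    intro n hn
    apply Finset.sum_pos
    · intro i _; positivity
    · exact Finset.nonempty_range_iff.mpr (by omega)
  have hHtop : Tendsto H atTop atTop := by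
    have hlog : Tendsto (fun n : ℕ => Real.log n) atTop atTop :=
      Real.tendsto_log_atTop.comp tendsto_natCast_atTop_atTop
    have := stmt_9_aux_harmonic.add_atTop hlog
    apply this.congr
    intro n; simp [hHdef]
  -- v n as a range sum
  have hvr : ∀ n : ℕ, v n = ∑ i ∈ range n, a (1 + i) ^ 2 := by
    intro n
    rw [hv n, show Finset.Icc 1 n = Finset.Ico 1 (n + 1) by rw [Finset.Ico_add_one_right_eq_Icc],
      Finset.sum_Ico_eq_sum_range]
    simp
  -- littleO comparison
  have hlo : (fun n : ℕ => a (1 + n) ^ 2 - (π / 4) * ((n : ℝ) + 1)⁻¹)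
      =o[atTop] (fun n : ℕ => ((n : ℝ) + 1)⁻¹) := by
    rw [Asymptotics.isLittleO_iff_tendsto (fun n h => absurd h (by positivity))]
    have : Tendsto (fun n : ℕ => ((n : ℝ) + 1) * a (n + 1) ^ 2 - π / 4) atTop (nhds 0) := by
      simpa using hb.sub (tendsto_const_nhds (x := π / 4))
    apply this.congr
    intro n
    have hne : ((n : ℝ) + 1) ≠ 0 := by positivity
    rw [show 1 + n = n + 1 from Nat.add_comm 1 n]
    field_simp
  have hsum : (fun n : ℕ => ∑ i ∈ range n, (a (1 + i) ^ 2 - (π / 4) * ((i : ℝ) + 1)⁻¹))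
      =o[atTop] H :=
    hlo.sum_range (fun i => by positivity) hHtop
  -- v n / H n → π / 4
  have hvH : Tendsto (fun n : ℕ => v n / H n) atTop (nhds (π / 4)) := by
    have h0 : Tendsto (fun n : ℕ => (v n - (π / 4) * H n) / H n) atTop (nhds 0) := by
      rw [← Asymptotics.isLittleO_iff_tendsto']
      · apply hsum.congr' _ (by rfl)
        filter_upwards with n
        rw [hvr n, hHdef, Finset.sum_sub_distrib, Finset.mul_sum]
      · filter_upwards [eventually_ge_atTop 1] with n hn h
        exact absurd h (hHpos n hn).ne'
    have := h0.add (tendsto_const_nhds (x := π / 4))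
    rw [zero_add] at this
    apply this.congr'
    filter_upwards [eventually_ge_atTop 1] with n hn
    have hne := (hHpos n hn).ne'
    rw [sub_div, mul_div_assoc, div_self hne, mul_one, sub_add_cancel]
  -- H n / log n → 1
  have hHlog : Tendsto (fun n : ℕ => H n / Real.log n) atTop (nhds 1) := by
    have hlog : Tendsto (fun n : ℕ => Real.log n) atTop atTop :=
      Real.tendsto_log_atTop.comp tendsto_natCast_atTop_atTop
    have h1 : Tendsto (fun n : ℕ => (H n - Real.log n) / Real.log n) atTop (nhds 0) :=
      stmt_9_aux_harmonic.div_atTop hlog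
    have := h1.add (tendsto_const_nhds (x := (1:ℝ)))
    rw [zero_add] at this
    apply this.congr'
    filter_upwards [hlog.eventually_gt_atTop 0] with n hn
    rw [sub_div, div_self hn.ne', sub_add_cancel]
  have := hvH.mul hHlog
  rw [mul_one] at this
  apply this.congr'
  filter_upwards [eventually_ge_atTop 1] with n hn
  have hne := (hHpos n hn).ne'
  rw [div_mul_div_comm, mul_comm (v n) (H n), mul_div_mul_left _ _ hne]
end

section
/- For α < 1/2, the explosion coefficient f_n = a_n^2 / v_n satisfies n · f_n → 1 − 2α as n → ∞; in particular f_n → 0. -/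
open Filter

set_option maxHeartbeats 1600000 in
/-- For `α < 1/2`, the explosion coefficient `f_n = a_n²/v_n` satisfies
`n f_n → 1 − 2α`; in particular `f_n → 0`. -/
theorem stmt_10 (α : ℝ) (hα : α ∈ Set.Ioo (-1 : ℝ) (1 / 2)) (a v f : ℕ → ℝ)
    (ha : ∀ n, a n = Real.Gamma n * Real.Gamma (α + 1) / Real.Gamma ((n : ℝ) + α))
    (hv : ∀ n, v n = ∑ k ∈ Finset.Icc 1 n, a k ^ 2)
    (hf : ∀ n, f n = a n ^ 2 / v n) :
    Tendsto (fun n : ℕ => (n : ℝ) * f n) atTop (nhds (1 - 2 * α)) ∧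
      Tendsto f atTop (nhds 0) := by
  obtain ⟨hα1, hα2⟩ := hα
  have h12 : (0:ℝ) < 1 - 2 * α := by linarith
  -- positivity of a
  have hapos : ∀ n : ℕ, 1 ≤ n → 0 < a n := by
    intro n hn
    have hn' : (0:ℝ) < n := by exact_mod_cast hn
    rw [ha]
    have h1 := Real.Gamma_pos_of_pos hn'
    have h2 := Real.Gamma_pos_of_pos (show (0:ℝ) < α + 1 by linarith)
    have h3 := Real.Gamma_pos_of_pos (show (0:ℝ) < (n:ℝ) + α by
      have : (1:ℝ) ≤ n := by exact_mod_cast hn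
      linarith)
    positivity
  have ha1 : a 1 = 1 := by
    rw [ha]
    have h2 : Real.Gamma (α + 1) ≠ 0 :=
      (Real.Gamma_pos_of_pos (show (0:ℝ) < α + 1 by linarith)).ne'
    rw [show ((1:ℕ):ℝ) = 1 by norm_num, Real.Gamma_one, add_comm (1:ℝ) α]
    field_simp
  -- recurrence
  have hrec : ∀ n : ℕ, 1 ≤ n → a (n + 1) = a n * n / ((n : ℝ) + α) := by
    intro n hn
    have hn' : (1:ℝ) ≤ n := by exact_mod_cast hn
    have hn0 : ((n:ℝ)) ≠ 0 := by linarith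
    have hna : (0:ℝ) < (n:ℝ) + α := by linarith
    have hg : Real.Gamma ((n:ℝ) + α) ≠ 0 := (Real.Gamma_pos_of_pos hna).ne'
    have hg1 : Real.Gamma ((n:ℝ) + α + 1) = ((n:ℝ) + α) * Real.Gamma ((n:ℝ) + α) :=
      Real.Gamma_add_one hna.ne'
    rw [ha (n+1), ha n]
    push_cast
    rw [Real.Gamma_add_one hn0, show (n:ℝ) + 1 + α = (n:ℝ) + α + 1 by ring, hg1]
    field_simp
  -- key step identity
  have hstep : ∀ n : ℕ, 1 ≤ n →
      ((n:ℝ) + 1) * a (n+1) ^ 2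
        = (n:ℝ) * a n ^ 2 + a (n+1) ^ 2 * ((1 - 2*α) - α^2 / n) := by
    intro n hn
    have hn' : (1:ℝ) ≤ n := by exact_mod_cast hn
    have hn0 : ((n:ℝ)) ≠ 0 := by linarith
    have hna : ((n:ℝ) + α) ≠ 0 := by nlinarith
    rw [hrec n hn]
    field_simp
    ring
  -- the remainder sum
  set Rr : ℕ → ℝ := fun n => ∑ k ∈ Finset.Icc 2 n, a k ^ 2 / ((k:ℝ) - 1) with hRr
  have hIcc1 : ∀ (g : ℕ → ℝ) (m : ℕ), ∑ k ∈ Finset.Icc 1 m, g k = ∑ k ∈ Finset.Ioc 0 m, g k :=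
    fun g m => Finset.sum_congr (Finset.Icc_add_one_left_eq_Ioc 0 m) (fun _ _ => rfl)
  have hIcc2 : ∀ m : ℕ, Rr m = ∑ k ∈ Finset.Ioc 1 m, a k ^ 2 / ((k:ℝ) - 1) := by
    intro m
    rw [hRr]
    exact Finset.sum_congr (Finset.Icc_add_one_left_eq_Ioc 1 m) (fun _ _ => rfl)
  -- telescoping identity
  have htel : ∀ n : ℕ, 1 ≤ n →
      (n:ℝ) * a n ^ 2 = (1 - 2*α) * v n + 2*α - α^2 * Rr n := by
    intro n hn
    induction n, hn using Nat.le_induction with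
    | base =>
      simp [hv, hRr, ha1]
    | succ n hn ih =>
      have hvsucc : v (n+1) = v n + a (n+1) ^ 2 := by
        rw [hv, hv, Finset.sum_Icc_succ_top (by omega)]
      have hRsucc : Rr (n+1) = Rr n + a (n+1) ^ 2 / ((n:ℝ) + 1 - 1) := by
        rw [hRr]
        simp only []
        rw [Finset.sum_Icc_succ_top (by omega)]
        push_cast
        ring_nf
      have h1 : ((n:ℝ)+1-1) = (n:ℝ) := by ring
      rw [h1] at hRsucc
      have := hstep n hn
      push_cast
      rw [hvsucc, hRsucc]
      rw [show ((n:ℝ)+1) * a (n+1)^2 = (n:ℝ) * a n ^2 + a (n+1)^2 * ((1-2*α) - α^2/n) from this,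
        ih]
      ring
  -- monotonicity of v
  have hvmono : Monotone v := by
    apply monotone_nat_of_le_succ
    intro n
    rcases Nat.eq_zero_or_pos n with h | h
    · subst h
      simp [hv, ha1]
    · rw [hv, hv, Finset.sum_Icc_succ_top (by omega)]
      nlinarith [sq_nonneg (a (n+1))]
  have hv1 : ∀ n : ℕ, 1 ≤ n → 1 ≤ v n := by
    intro n hn
    have : v 1 ≤ v n := hvmono hn
    have hv1' : v 1 = 1 := by simp [hv, ha1]
    linarith
  -- choose N0
  obtain ⟨N0', hN0'⟩ := exists_nat_ge (α^2 / (1 - 2*α))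
  set N0 : ℕ := N0' + 1 with hN0def
  have hN0ge : ∀ n : ℕ, N0 ≤ n → (0:ℝ) ≤ (1 - 2*α) - α^2 / n := by
    intro n hn
    have hn1 : (1:ℕ) ≤ n := by omega
    have hn' : (0:ℝ) < n := by exact_mod_cast hn1
    have h2 : (N0':ℝ) ≤ n := by
      have : (N0:ℝ) ≤ n := by exact_mod_cast hn
      push_cast [hN0def] at this ⊢
      linarith
    have : α^2 / (1 - 2*α) ≤ (n:ℝ) := le_trans hN0' h2
    rw [div_le_iff₀ h12] at this
    rw [sub_nonneg, div_le_iff₀ hn']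
    linarith
  -- n * a n ^2 ≥ c for n ≥ N0
  set c : ℝ := (N0:ℝ) * a N0 ^ 2 with hc
  have hcpos : 0 < c := by
    have h1 : (0:ℝ) < (N0:ℝ) := by exact_mod_cast (by omega : 0 < N0)
    have h2 := hapos N0 (by omega)
    exact mul_pos h1 (pow_pos h2 2)
  have hlow : ∀ n : ℕ, N0 ≤ n → c ≤ (n:ℝ) * a n ^ 2 := by
    intro n hn
    induction n, hn using Nat.le_induction with
    | base => exact le_rfl
    | succ n hn ih =>
      have h1 : 1 ≤ n := by omega
      have := hstep n h1
      have h2 := hN0ge n hn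
      push_cast
      nlinarith [sq_nonneg (a (n+1))]
  -- harmonic sums
  set H : ℕ → ℝ := fun n => ∑ k ∈ Finset.Icc 1 n, (1:ℝ)/k with hH
  have hHrange : ∀ n : ℕ, H n = ∑ i ∈ Finset.range n, (1:ℝ)/(i+1) := by
    intro n
    induction n with
    | zero => simp [hH]
    | succ n ih =>
      rw [hH]
      simp only []
      rw [Finset.sum_Icc_succ_top (by omega), Finset.sum_range_succ,
        show (∑ k ∈ Finset.Icc 1 n, (1:ℝ)/(k:ℝ)) = ∑ i ∈ Finset.range n, (1:ℝ)/((i:ℝ)+1) from ih]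
      push_cast
      ring
  have hHtop : Tendsto H atTop atTop := by
    have := Real.tendsto_sum_range_one_div_nat_succ_atTop
    apply this.congr
    intro n
    rw [hHrange]
  -- v tends to atTop
  have hvtop : Tendsto v atTop atTop := by
    apply tendsto_atTop_mono' atTop (f₁ := fun n => c * H n + (v (N0-1) - c * H (N0-1)))
    · filter_upwards [eventually_ge_atTop N0] with n hn
      have hsplit : v (N0-1) + ∑ k ∈ Finset.Ioc (N0-1) n, a k ^ 2 = v n := by
        rw [hv (N0-1), hv n, hIcc1 _ (N0-1), hIcc1 _ n]
        exact Finset.sum_Ioc_consecutive _ (Nat.zero_le _) (by omega)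
      have hHsplit : H (N0-1) + ∑ k ∈ Finset.Ioc (N0-1) n, (1:ℝ)/k = H n := by
        rw [hH]
        simp only []
        rw [hIcc1 _ (N0-1), hIcc1 _ n]
        exact Finset.sum_Ioc_consecutive _ (Nat.zero_le _) (by omega)
      have hterm : ∑ k ∈ Finset.Ioc (N0-1) n, c * ((1:ℝ)/k) ≤ ∑ k ∈ Finset.Ioc (N0-1) n, a k ^ 2 := by
        apply Finset.sum_le_sum
        intro k hk
        have hk1 : N0 - 1 < k := (Finset.mem_Ioc.mp hk).1
        have hkN : N0 ≤ k := by omega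
        have hk0 : (0:ℝ) < k := by exact_mod_cast (by omega : 0 < k)
        have := hlow k hkN
        rw [mul_one_div, div_le_iff₀ hk0]
        linarith [this]
      have hcsum : ∑ k ∈ Finset.Ioc (N0-1) n, c * ((1:ℝ)/k)
          = c * ∑ k ∈ Finset.Ioc (N0-1) n, (1:ℝ)/k := by
        rw [Finset.mul_sum]
      nlinarith [hterm, hsplit, hHsplit, hcsum]
    · apply tendsto_atTop_add_const_right
      exact hHtop.const_mul_atTop hcpos
  -- nonneg of Rr
  have hRn0 : ∀ n : ℕ, 0 ≤ Rr n := by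
    intro n
    rw [hRr]
    apply Finset.sum_nonneg
    intro k hk
    have hk2 : 2 ≤ k := (Finset.mem_Icc.mp hk).1
    have : (2:ℝ) ≤ k := by exact_mod_cast hk2
    apply div_nonneg (sq_nonneg _)
    linarith
  -- Rr/v → 0
  have hRv : Tendsto (fun n => Rr n / v n) atTop (nhds 0) := by
    rw [Metric.tendsto_atTop]
    intro ε hε
    obtain ⟨K0, hK0⟩ := exists_nat_one_div_lt (show (0:ℝ) < ε/2 by linarith)
    set K : ℕ := K0 + 1 with hKdef
    set B : ℝ := Rr (K+1) with hB
    obtain ⟨M, hM⟩ := (hvtop.eventually_ge_atTop (2*B/ε + 1)).exists_forall_of_atTop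
    refine ⟨max (K+1) M, ?_⟩
    intro n hn
    have hnK : K + 1 ≤ n := le_trans (le_max_left _ _) hn
    have hnM : M ≤ n := le_trans (le_max_right _ _) hn
    have hvn1 : 1 ≤ v n := hv1 n (by omega)
    have hvpos : 0 < v n := by linarith
    have hvM : 2*B/ε + 1 ≤ v n := hM n hnM
    -- split Rr n
    have hsplit : B + ∑ k ∈ Finset.Ioc (K+1) n, a k ^ 2 / ((k:ℝ)-1) = Rr n := by
      rw [hB, hIcc2 (K+1), hIcc2 n]
      exact Finset.sum_Ioc_consecutive _ (by omega) hnK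
    have hKpos : (0:ℝ) < (K:ℝ) := by exact_mod_cast (by omega : 0 < K)
    have hterm : ∑ k ∈ Finset.Ioc (K+1) n, a k ^2 / ((k:ℝ)-1)
        ≤ ∑ k ∈ Finset.Ioc (K+1) n, a k ^2 * (1/(K:ℝ)) := by
      apply Finset.sum_le_sum
      intro k hk
      have hk2 : K + 1 < k := (Finset.mem_Ioc.mp hk).1
      have hkK : (K:ℝ) ≤ (k:ℝ) - 1 := by
        have : (K:ℝ) + 2 ≤ k := by exact_mod_cast hk2
        linarith
      rw [mul_one_div]
      exact div_le_div_of_nonneg_left (sq_nonneg _) hKpos hkK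
    have hsum2 : ∑ k ∈ Finset.Ioc (K+1) n, a k ^2 ≤ v n := by
      have h0 : (0:ℝ) ≤ ∑ k ∈ Finset.Ioc 0 (K+1), a k ^2 :=
        Finset.sum_nonneg fun k _ => sq_nonneg _
      have h1 := Finset.sum_Ioc_consecutive (fun k => a k ^ 2) (Nat.zero_le (K+1)) hnK
      rw [hv n, hIcc1 _ n]
      linarith
    have hRle : Rr n ≤ B + v n * (1/(K:ℝ)) := by
      rw [← hsplit]
      have : ∑ k ∈ Finset.Ioc (K+1) n, a k ^2 * (1/(K:ℝ))
          = (∑ k ∈ Finset.Ioc (K+1) n, a k ^2) * (1/(K:ℝ)) := by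
        rw [Finset.sum_mul]
      nlinarith [hterm, hsum2, one_div_pos.mpr hKpos]
    have hKe : 1/(K:ℝ) < ε/2 := by
      have : ((K:ℝ)) = (K0:ℝ) + 1 := by push_cast [hKdef]; ring
      rw [this]; exact hK0
    have hB0 : 0 ≤ B := hRn0 (K+1)
    have h2B : 2*B ≤ ε * (v n - 1) := by
      have h' : 2*B/ε ≤ v n - 1 := by linarith
      rw [div_le_iff₀ hε] at h'
      linarith [h']
    rw [Real.dist_eq, sub_zero, abs_of_nonneg (div_nonneg (hRn0 n) hvpos.le)]
    rw [div_lt_iff₀ hvpos]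
    nlinarith [mul_lt_mul_of_pos_left hKe hvpos]
  -- key formula
  have hkey : ∀ n : ℕ, 1 ≤ n →
      (n:ℝ) * f n = (1 - 2*α) + 2*α * (v n)⁻¹ - α^2 * (Rr n / v n) := by
    intro n hn
    have hvn0 : v n ≠ 0 := by have := hv1 n hn; linarith
    rw [hf n, mul_div_assoc', htel n hn]
    field_simp
    try ring
  have hlim1 : Tendsto (fun n => (1 - 2*α) + 2*α * (v n)⁻¹ - α^2 * (Rr n / v n))
      atTop (nhds (1 - 2*α)) := by
    have h1 : Tendsto (fun n => (v n)⁻¹) atTop (nhds 0) := hvtop.inv_tendsto_atTop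
    have h2 : Tendsto (fun n => (1 - 2*α) + 2*α * (v n)⁻¹ - α^2 * (Rr n / v n))
        atTop (nhds ((1 - 2*α) + 2*α * 0 - α^2 * 0)) :=
      (tendsto_const_nhds.add (h1.const_mul (2*α))).sub (hRv.const_mul (α^2))
    simpa using h2
  have hA : Tendsto (fun n : ℕ => (n:ℝ) * f n) atTop (nhds (1 - 2*α)) := by
    apply hlim1.congr'
    filter_upwards [eventually_ge_atTop 1] with n hn
    exact (hkey n hn).symm
  refine ⟨hA, ?_⟩
  have hBt := hA.mul tendsto_inv_atTop_nhds_zero_nat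
  rw [mul_zero] at hBt
  apply hBt.congr'
  filter_upwards [eventually_ge_atTop 1] with n hn
  have hn0 : ((n:ℝ)) ≠ 0 := by
    have : (1:ℝ) ≤ n := by exact_mod_cast hn
    linarith
  field_simp
end

section
/- For α = 1/2, the explosion coefficient f_n = a_n^2 / v_n satisfies n (log n) · f_n → 1 as n → ∞. -/
open Filter Finset Real

/-- For `α = 1/2`, the explosion coefficient `f_n = a_n²/v_n` satisfies
`n (log n) f_n → 1`. -/
theorem stmt_11 (a v f : ℕ → ℝ)
    (ha : ∀ n, a n = Real.Gamma n * Real.Gamma (3 / 2) / Real.Gamma ((n : ℝ) + 1 / 2))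
    (hv : ∀ n, v n = ∑ k ∈ Finset.Icc 1 n, a k ^ 2)
    (hf : ∀ n, f n = a n ^ 2 / v n) :
    Tendsto (fun n : ℕ => (n : ℝ) * Real.log n * f n) atTop (nhds 1) := by
  have hG32 : Real.Gamma (3/2) ≠ 0 := (Real.Gamma_pos_of_pos (by norm_num)).ne'
  -- a 1 = 1
  have ha1 : a 1 = 1 := by
    have := ha 1
    rw [Nat.cast_one] at this
    rw [this, Real.Gamma_one]
    norm_num
    exact hG32
  -- recurrence
  have hrec : ∀ m : ℕ, a (m+2) = a (m+1) * (((m:ℝ)+1) / ((m:ℝ)+1+1/2)) := by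
    intro m
    have h1 : ((m:ℝ)+1) ≠ 0 := by positivity
    have h2 : ((m:ℝ)+1+1/2) ≠ 0 := by positivity
    have h3 : Real.Gamma ((m:ℝ)+1+1/2) ≠ 0 := (Real.Gamma_pos_of_pos (by positivity)).ne'
    rw [ha (m+2), ha (m+1)]
    push_cast
    rw [show ((m:ℝ) + 2 + 1/2) = ((m:ℝ)+1+1/2) + 1 by ring, Real.Gamma_add_one h2,
      show ((m:ℝ) + 2) = ((m:ℝ)+1) + 1 by ring, Real.Gamma_add_one h1]
    field_simp
  -- closed form via Wallis partial products
  set W : ℕ → ℝ := fun m => ∏ i ∈ Finset.range m,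
    ((2 : ℝ) * i + 2) / (2 * i + 1) * ((2 * i + 2) / (2 * i + 3)) with hW
  have hA : ∀ m : ℕ, a (m+1)^2 = W m / (2*(m:ℝ)+1) := by
    intro m
    induction m with
    | zero => simp [hW, ha1]
    | succ k ih =>
      have h1 : (2*(k:ℝ)+1) ≠ 0 := by positivity
      have h2 : (2*(k:ℝ)+3) ≠ 0 := by positivity
      have h3 : ((k:ℝ)+1+1/2) ≠ 0 := by positivity
      rw [hrec k, mul_pow, div_pow, ih]
      simp only [hW, Finset.prod_range_succ]
      push_cast
      field_simp
      ring
  -- n * a n ^ 2 → π/4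
  have hWlim : Tendsto W atTop (nhds (π/2)) := Real.tendsto_prod_pi_div_two
  have hhalf : Tendsto (fun m : ℕ => ((m:ℝ)+1) / (2*(m:ℝ)+1)) atTop (nhds (1/2)) := by
    have h0 : Tendsto (fun m : ℕ => (1 + ((m:ℝ))⁻¹) / (2 + ((m:ℝ))⁻¹)) atTop
        (nhds ((1+0)/(2+0))) :=
      Tendsto.div (tendsto_const_nhds.add tendsto_inv_atTop_nhds_zero_nat)
        (tendsto_const_nhds.add tendsto_inv_atTop_nhds_zero_nat) (by norm_num)
    rw [show ((1:ℝ)+0)/(2+0) = 1/2 by norm_num] at h0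
    refine Tendsto.congr' ?_ h0
    filter_upwards [eventually_ge_atTop 1] with m hm
    have hm0 : ((m:ℝ)) ≠ 0 := by
      have : (1:ℝ) ≤ (m:ℝ) := by exact_mod_cast hm
      linarith
    field_simp
  have hD1 : Tendsto (fun m : ℕ => ((m+1:ℕ):ℝ) * a (m+1)^2) atTop (nhds (π/4)) := by
    have h0 := hWlim.mul hhalf
    rw [show (π/2)*(1/2) = π/4 by ring] at h0
    refine h0.congr fun m => ?_
    rw [hA m]
    push_cast
    try ring
  have hD : Tendsto (fun n : ℕ => (n:ℝ) * a n ^ 2) atTop (nhds (π/4)) := by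
    rw [← Filter.tendsto_add_atTop_iff_nat 1]
    exact hD1
  -- harmonic sums
  set S : ℕ → ℝ := fun n => ∑ i ∈ Finset.range n, 1/((i:ℝ)+1) with hSdef
  have hlog : Tendsto (fun n : ℕ => Real.log n) atTop atTop :=
    Real.tendsto_log_atTop.comp tendsto_natCast_atTop_atTop
  have hSlog : Tendsto (fun n : ℕ => S n - Real.log n) atTop
      (nhds Real.eulerMascheroniConstant) := by
    refine Real.tendsto_harmonic_sub_log.congr fun n => ?_
    congr 1
    rw [hSdef]
    push_cast [harmonic]
    exact Finset.sum_congr rfl fun i _ => by rw [one_div]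
  have hS_atTop : Tendsto S atTop atTop := by
    have := hSlog.add_atTop hlog
    simpa using this
  have hSlog1 : Tendsto (fun n : ℕ => S n / Real.log n) atTop (nhds 1) := by
    have h0 : Tendsto (fun n : ℕ => (S n - Real.log n)/Real.log n) atTop (nhds 0) :=
      hSlog.div_atTop hlog
    have h1 := h0.add (tendsto_const_nhds : Tendsto (fun _ : ℕ => (1:ℝ)) atTop (nhds 1))
    rw [zero_add] at h1
    refine Tendsto.congr' ?_ h1
    filter_upwards [eventually_ge_atTop 2] with n hn
    have hlogn : Real.log n ≠ 0 := by
      have : (1:ℝ) < (n:ℝ) := by exact_mod_cast hn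
      exact (Real.log_pos this).ne'
    field_simp
    ring
  -- little-o estimate for error term
  have hlittle : (fun i : ℕ => a (i+1)^2 - (π/4) * (1/((i:ℝ)+1))) =o[atTop]
      (fun i : ℕ => 1/((i:ℝ)+1)) := by
    rw [Asymptotics.isLittleO_iff_tendsto (fun i hi => absurd hi (by positivity))]
    have h0 := hD1.sub (tendsto_const_nhds : Tendsto (fun _ : ℕ => π/4) atTop (nhds (π/4)))
    rw [sub_self] at h0
    refine h0.congr fun i => ?_
    have hi : ((i:ℝ)+1) ≠ 0 := by positivity
    push_cast
    field_simp
  have hsum := hlittle.sum_range (fun i => by positivity) hS_atTop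
  set E : ℕ → ℝ := fun n => ∑ i ∈ Finset.range n,
    (a (i+1)^2 - (π/4) * (1/((i:ℝ)+1))) with hEdef
  have hES : Tendsto (fun n => E n / S n) atTop (nhds 0) :=
    hsum.tendsto_div_nhds_zero
  have hvS : ∀ n, v n = (π/4) * S n + E n := by
    intro n
    have h1 : (π/4) * S n + E n = ∑ i ∈ Finset.range n, a (i+1)^2 := by
      rw [hSdef, hEdef, Finset.mul_sum, ← Finset.sum_add_distrib]
      exact Finset.sum_congr rfl fun i _ => by ring
    rw [h1, hv n, ← Finset.Ico_add_one_right_eq_Icc, Finset.sum_Ico_eq_sum_range]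
    refine Finset.sum_congr (by rw [Nat.add_sub_cancel]) fun i _ => by rw [Nat.add_comm]
  have hSpos : ∀ n, 1 ≤ n → 0 < S n := by
    intro n hn
    rw [hSdef]
    apply Finset.sum_pos (fun i _ => by positivity)
    exact ⟨0, Finset.mem_range.mpr hn⟩
  have hvS4 : Tendsto (fun n => v n / S n) atTop (nhds (π/4)) := by
    have h1 := (tendsto_const_nhds : Tendsto (fun _ : ℕ => π/4) atTop (nhds (π/4))).add hES
    rw [add_zero] at h1
    refine Tendsto.congr' ?_ h1
    filter_upwards [eventually_ge_atTop 1] with n hn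
    have hSn : S n ≠ 0 := (hSpos n hn).ne'
    rw [hvS n, add_div, mul_div_assoc, div_self hSn, mul_one]
  have hE : Tendsto (fun n => v n / Real.log n) atTop (nhds (π/4)) := by
    have h1 := hvS4.mul hSlog1
    rw [mul_one] at h1
    refine Tendsto.congr' ?_ h1
    filter_upwards [eventually_ge_atTop 1] with n hn
    have hSn : S n ≠ 0 := (hSpos n hn).ne'
    rw [div_mul_div_comm, mul_comm (v n) (S n), mul_div_mul_left _ _ hSn]
  -- finish
  have hvpos : ∀ n, 1 ≤ n → 0 < v n := by
    intro n hn
    rw [hv n]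
    refine Finset.sum_pos' (fun i _ => sq_nonneg _)
      ⟨1, Finset.mem_Icc.mpr ⟨le_refl 1, hn⟩, by rw [ha1]; norm_num⟩
  have hfin := hD.div hE (by positivity : (π/4:ℝ) ≠ 0)
  rw [div_self (by positivity : (π/4:ℝ) ≠ 0)] at hfin
  refine Tendsto.congr' ?_ hfin
  filter_upwards [eventually_ge_atTop 2] with n hn
  have hlogn : Real.log n ≠ 0 := by
    have : (1:ℝ) < (n:ℝ) := by exact_mod_cast hn
    exact (Real.log_pos this).ne'
  have hvn : v n ≠ 0 := (hvpos n (le_trans one_le_two hn)).ne'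
  rw [hf n]
  simp only [Pi.div_apply]
  field_simp
end

section
/- For α ∈ (0,1), with a_n = Γ(n)Γ(α+1)/Γ(n+α) and A_n = ∑_{k=1}^n a_k, there exist positive constants c, C such that c/n^{1−α} ≤ |A_n/(n a_n) − 1/(1−α)| ≤ C/n^{1−α} for all sufficiently large n (i.e., |A_n/(n a_n) − 1/(1−α)| ∼ n^{−(1−α)}). -/
open Filter

private lemma gamma_logconvex {x y t : ℝ} (hx : 0 < x) (hy : 0 < y)
    (ht0 : 0 ≤ t) (ht1 : t ≤ 1) :
    Real.Gamma ((1 - t) * x + t * y) ≤ Real.Gamma x ^ (1 - t) * Real.Gamma y ^ t := by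
  have harg : 0 < (1 - t) * x + t * y := by
    rcases eq_or_lt_of_le ht0 with h | h
    · rw [← h]; simpa using hx
    · have h1 : 0 ≤ (1 - t) * x := mul_nonneg (by linarith) hx.le
      nlinarith
  have h := Real.convexOn_log_Gamma.2 (Set.mem_Ioi.mpr hx) (Set.mem_Ioi.mpr hy)
    (by linarith : (0:ℝ) ≤ 1 - t) ht0 (by ring)
  simp only [smul_eq_mul, Function.comp_apply] at h
  have hΓx := Real.Gamma_pos_of_pos hx
  have hΓy := Real.Gamma_pos_of_pos hy
  have hΓa := Real.Gamma_pos_of_pos harg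
  calc Real.Gamma ((1 - t) * x + t * y)
      = Real.exp (Real.log (Real.Gamma ((1 - t) * x + t * y))) := (Real.exp_log hΓa).symm
    _ ≤ Real.exp ((1 - t) * Real.log (Real.Gamma x) + t * Real.log (Real.Gamma y)) :=
        Real.exp_le_exp.mpr h
    _ = Real.Gamma x ^ (1 - t) * Real.Gamma y ^ t := by
        rw [Real.exp_add, Real.rpow_def_of_pos hΓx, Real.rpow_def_of_pos hΓy,
          mul_comm (Real.log (Real.Gamma x)), mul_comm (Real.log (Real.Gamma y))]

private lemma tele (α : ℝ) (h0 : 0 < α) (h1 : α < 1) :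
    ∀ n : ℕ, 1 ≤ n → ∑ k ∈ Finset.Icc 1 n, Real.Gamma k / Real.Gamma ((k:ℝ) + α)
      = (1 / (1 - α)) * ((n : ℝ) * Real.Gamma n / Real.Gamma ((n:ℝ) + α) - 1 / Real.Gamma α) := by
  have hΓα := Real.Gamma_pos_of_pos h0
  have h1α : (1:ℝ) - α ≠ 0 := by intro h; nlinarith
  intro n hn
  induction n, hn using Nat.le_induction with
  | base =>
      simp only [Finset.Icc_self, Finset.sum_singleton, Nat.cast_one]
      rw [Real.Gamma_one, show (1:ℝ) + α = α + 1 by ring, Real.Gamma_add_one h0.ne']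
      field_simp
  | succ n hn ih =>
      have hN : (0:ℝ) < (n:ℝ) := by exact_mod_cast hn
      have hNα : (0:ℝ) < (n:ℝ) + α := by linarith
      have hg := Real.Gamma_pos_of_pos hNα
      have hG := Real.Gamma_pos_of_pos hN
      rw [Finset.sum_Icc_succ_top (by omega : 1 ≤ n + 1), ih]
      push_cast
      rw [show ((n:ℝ) + 1 + α) = ((n:ℝ) + α) + 1 by ring,
        Real.Gamma_add_one hNα.ne', Real.Gamma_add_one hN.ne']
      field_simp
      ring

/-- For `α ∈ (0,1)`, `|A_n/(n a_n) − 1/(1−α)| ∼ n^{−(1−α)}`: there are positive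
constants `c, C` with `c/n^{1−α} ≤ |A_n/(n a_n) − 1/(1−α)| ≤ C/n^{1−α}` for large `n`. -/
theorem stmt_12 (α : ℝ) (hα : α ∈ Set.Ioo (0 : ℝ) 1) (a A : ℕ → ℝ)
    (ha : ∀ n, a n = Real.Gamma n * Real.Gamma (α + 1) / Real.Gamma ((n : ℝ) + α))
    (hA : ∀ n, A n = ∑ k ∈ Finset.Icc 1 n, a k) :
    ∃ c C : ℝ, 0 < c ∧ 0 < C ∧
      ∀ᶠ n : ℕ in atTop,
        c / (n : ℝ) ^ ((1 : ℝ) - α) ≤ |A n / ((n : ℝ) * a n) - 1 / (1 - α)| ∧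
          |A n / ((n : ℝ) * a n) - 1 / (1 - α)| ≤ C / (n : ℝ) ^ ((1 : ℝ) - α) := by
  obtain ⟨h0, h1⟩ := hα
  have hΓα := Real.Gamma_pos_of_pos h0
  have h1α : (0:ℝ) < 1 - α := by linarith
  have hΓα1 : (0:ℝ) < Real.Gamma (α + 1) := Real.Gamma_pos_of_pos (by linarith)
  refine ⟨1 / (2 * (1 - α) * Real.Gamma α), 1 / ((1 - α) * Real.Gamma α),
    by positivity, by positivity, ?_⟩
  filter_upwards [eventually_ge_atTop 2] with n hn
  have hN2 : (2:ℝ) ≤ (n:ℝ) := by exact_mod_cast hn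
  have hN : (0:ℝ) < (n:ℝ) := by linarith
  have hNα : (0:ℝ) < (n:ℝ) + α := by linarith
  have hg := Real.Gamma_pos_of_pos hNα
  have hG := Real.Gamma_pos_of_pos hN
  -- step 1: compute the difference explicitly
  have hAn : A n = Real.Gamma (α + 1) * ((1 / (1 - α)) *
      ((n : ℝ) * Real.Gamma n / Real.Gamma ((n:ℝ) + α) - 1 / Real.Gamma α)) := by
    rw [hA, ← tele α h0 h1 n (by omega), Finset.mul_sum]
    exact Finset.sum_congr rfl fun k _ => by rw [ha k]; ring
  have hdiff : A n / ((n : ℝ) * a n) - 1 / (1 - α)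
      = -(Real.Gamma ((n:ℝ) + α) / ((1 - α) * ((n:ℝ) * Real.Gamma n * Real.Gamma α))) := by
    rw [hAn, ha n]
    field_simp
    ring
  rw [hdiff, abs_neg, abs_of_pos (by positivity)]
  -- step 2: Gamma ratio bounds from log-convexity
  have hub : Real.Gamma ((n:ℝ) + α) ≤ Real.Gamma (n:ℝ) * (n:ℝ) ^ α := by
    have h := gamma_logconvex hN (by linarith : (0:ℝ) < (n:ℝ) + 1) h0.le h1.le
    rw [show (1 - α) * (n:ℝ) + α * ((n:ℝ) + 1) = (n:ℝ) + α by ring,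
      Real.Gamma_add_one hN.ne', Real.mul_rpow hN.le hG.le] at h
    calc Real.Gamma ((n:ℝ) + α)
        ≤ Real.Gamma (n:ℝ) ^ (1 - α) * ((n:ℝ) ^ α * Real.Gamma (n:ℝ) ^ α) := h
      _ = Real.Gamma (n:ℝ) ^ ((1 - α) + α) * (n:ℝ) ^ α := by
          rw [Real.rpow_add hG]; ring
      _ = Real.Gamma (n:ℝ) * (n:ℝ) ^ α := by norm_num
  have hm : (0:ℝ) < (n:ℝ) - 1 + α := by linarith
  have hlb : Real.Gamma (n:ℝ) * ((n:ℝ) - 1 + α) ^ α ≤ Real.Gamma ((n:ℝ) + α) := by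
    have h := gamma_logconvex hm hNα (by linarith : (0:ℝ) ≤ 1 - α) (by linarith : (1:ℝ) - α ≤ 1)
    rw [show (1:ℝ) - (1 - α) = α by ring,
      show α * ((n:ℝ) - 1 + α) + (1 - α) * ((n:ℝ) + α) = (n:ℝ) by ring] at h
    have hΓm : Real.Gamma ((n:ℝ) - 1 + α) = Real.Gamma ((n:ℝ) + α) / ((n:ℝ) - 1 + α) := by
      rw [show (n:ℝ) + α = ((n:ℝ) - 1 + α) + 1 by ring, Real.Gamma_add_one hm.ne']
      field_simp
    rw [hΓm, Real.div_rpow hg.le hm.le] at h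
    have h' : Real.Gamma (n:ℝ) ≤ Real.Gamma ((n:ℝ) + α) / ((n:ℝ) - 1 + α) ^ α := by
      calc Real.Gamma (n:ℝ)
          ≤ Real.Gamma ((n:ℝ) + α) ^ α / ((n:ℝ) - 1 + α) ^ α * Real.Gamma ((n:ℝ) + α) ^ (1 - α) := h
        _ = Real.Gamma ((n:ℝ) + α) ^ (α + (1 - α)) / ((n:ℝ) - 1 + α) ^ α := by
            rw [Real.rpow_add hg]; ring
        _ = Real.Gamma ((n:ℝ) + α) / ((n:ℝ) - 1 + α) ^ α := by norm_num
    have hmp : (0:ℝ) < ((n:ℝ) - 1 + α) ^ α := Real.rpow_pos_of_pos hm α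
    rw [le_div_iff₀ hmp] at h'
    exact h'
  -- step 3: conclude
  have hnn : (n:ℝ) ^ ((1:ℝ) - α) * (n:ℝ) ^ α = (n:ℝ) := by
    rw [← Real.rpow_add hN]; norm_num
  have h2α : (2:ℝ) ^ α ≤ 2 := by
    calc (2:ℝ) ^ α ≤ (2:ℝ) ^ (1:ℝ) := Real.rpow_le_rpow_of_exponent_le one_le_two h1.le
      _ = 2 := Real.rpow_one 2
  have hlow2 : (n:ℝ) ^ α / 2 ≤ ((n:ℝ) - 1 + α) ^ α := by
    calc (n:ℝ) ^ α / 2 ≤ (n:ℝ) ^ α / (2:ℝ) ^ α := by gcongr <;> positivity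
      _ = ((n:ℝ) / 2) ^ α := (Real.div_rpow hN.le (by norm_num) α).symm
      _ ≤ ((n:ℝ) - 1 + α) ^ α := Real.rpow_le_rpow (by positivity) (by linarith) h0.le
  have hkey2 : Real.Gamma ((n:ℝ) + α) * (n:ℝ) ^ ((1:ℝ) - α) ≤ Real.Gamma (n:ℝ) * (n:ℝ) := by
    calc Real.Gamma ((n:ℝ) + α) * (n:ℝ) ^ ((1:ℝ) - α)
        ≤ Real.Gamma (n:ℝ) * (n:ℝ) ^ α * (n:ℝ) ^ ((1:ℝ) - α) := by gcongr
      _ = Real.Gamma (n:ℝ) * ((n:ℝ) ^ ((1:ℝ) - α) * (n:ℝ) ^ α) := by ring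
      _ = Real.Gamma (n:ℝ) * (n:ℝ) := by rw [hnn]
  have hkey1 : Real.Gamma (n:ℝ) * (n:ℝ) ≤ 2 * (Real.Gamma ((n:ℝ) + α) * (n:ℝ) ^ ((1:ℝ) - α)) := by
    calc Real.Gamma (n:ℝ) * (n:ℝ)
        = Real.Gamma (n:ℝ) * ((n:ℝ) ^ ((1:ℝ) - α) * (n:ℝ) ^ α) := by rw [hnn]
      _ = 2 * (Real.Gamma (n:ℝ) * ((n:ℝ) ^ α / 2) * (n:ℝ) ^ ((1:ℝ) - α)) := by ring
      _ ≤ 2 * (Real.Gamma (n:ℝ) * (((n:ℝ) - 1 + α) ^ α) * (n:ℝ) ^ ((1:ℝ) - α)) := by gcongr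
      _ ≤ 2 * (Real.Gamma ((n:ℝ) + α) * (n:ℝ) ^ ((1:ℝ) - α)) := by gcongr
  constructor
  · rw [div_le_div_iff₀ (by positivity) (by positivity)]
    have e1 : 1 / (2 * (1 - α) * Real.Gamma α) * ((1 - α) * ((n:ℝ) * Real.Gamma n * Real.Gamma α))
        = Real.Gamma (n:ℝ) * (n:ℝ) / 2 := by
      field_simp
    rw [e1]
    linarith
  · rw [div_le_div_iff₀ (by positivity) (by positivity)]
    have e2 : 1 / ((1 - α) * Real.Gamma α) * ((1 - α) * ((n:ℝ) * Real.Gamma n * Real.Gamma α))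
        = Real.Gamma (n:ℝ) * (n:ℝ) := by
      field_simp
    rw [e2]
    exact hkey2
end

section
/- For the minimal random walk with α = p − q < 1/2, S_n/n → q/(1−α) almost surely as n → ∞. -/
open MeasureTheory Filter Topology

/-- Kronecker-type lemma specialised to linear weights. -/
lemma mrw_kronecker {v : ℕ → ℝ} {L : ℝ}
    (h : Tendsto (fun n => ∑ k ∈ Finset.range n, v k) atTop (𝓝 L)) :
    Tendsto (fun n : ℕ => (n : ℝ)⁻¹ * ∑ k ∈ Finset.range n, ((k : ℝ) + 2) * v k)
      atTop (𝓝 0) := by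
  set s : ℕ → ℝ := fun n => ∑ k ∈ Finset.range n, v k with hs
  have hid : ∀ n : ℕ, ∑ k ∈ Finset.range n, ((k : ℝ) + 2) * v k
      = ((n : ℝ) + 1) * s n - ∑ j ∈ Finset.range n, s j := by
    intro n
    induction n with
    | zero => simp [hs]
    | succ n ih =>
      rw [Finset.sum_range_succ, ih, Finset.sum_range_succ (f := s)]
      have hsucc : s (n + 1) = s n + v n := Finset.sum_range_succ _ _
      push_cast
      rw [hsucc]; ring
  have h1 : Tendsto (fun n : ℕ => (n : ℝ)⁻¹ * (((n : ℝ) + 1) * s n)) atTop (𝓝 L) := by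
    have h2 : Tendsto (fun n : ℕ => s n + (n : ℝ)⁻¹ * s n) atTop (𝓝 (L + 0 * L)) :=
      h.add (tendsto_inv_atTop_nhds_zero_nat.mul h)
    rw [zero_mul, add_zero] at h2
    apply h2.congr'
    filter_upwards [eventually_ge_atTop 1] with n hn
    have hn0 : (n : ℝ) ≠ 0 := by
      have : (0 : ℝ) < n := by exact_mod_cast hn
      linarith
    field_simp
  have h3 := h.cesaro
  have h4 := h1.sub h3
  rw [sub_self] at h4
  apply h4.congr
  intro n
  rw [hid n, mul_sub]

/-- Deterministic recursion lemma. -/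
lemma mrw_det {a q : ℝ} (ha1 : -1 ≤ a) (ha2 : a < 1) {y : ℕ → ℝ}
    (hy0 : ∀ n, 0 ≤ y n) (hy1 : ∀ n, y n ≤ 1)
    (h : Tendsto (fun n : ℕ => y n - q - a * ((n : ℝ)⁻¹ * ∑ k ∈ Finset.range n, y k))
      atTop (𝓝 0)) :
    Tendsto y atTop (𝓝 (q / (1 - a))) := by
  have hβ : 0 < 1 - a := by linarith
  set c : ℝ := q / (1 - a) with hc
  have hqc : q + a * c = c := by
    rw [hc]
    field_simp
    ring
  set A : ℕ → ℝ := fun n => (n : ℝ)⁻¹ * ∑ k ∈ Finset.range n, y k with hA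
  set e : ℕ → ℝ := fun n => A n - c with he
  set ε : ℕ → ℝ := fun n => y n - q - a * A n with hε
  have hεt : Tendsto ε atTop (𝓝 0) := h
  have hmulA : ∀ n : ℕ, (n : ℝ) * A n = ∑ k ∈ Finset.range n, y k := by
    intro n
    rcases Nat.eq_zero_or_pos n with h0 | h0
    · simp [h0, hA]
    · have hn0 : (n : ℝ) ≠ 0 := Nat.cast_ne_zero.mpr h0.ne'
      simp only [hA]
      rw [← mul_assoc, mul_inv_cancel₀ hn0, one_mul]
  have hrec : ∀ n : ℕ, ((n : ℝ) + 1) * e (n + 1) = ((n : ℝ) + a) * e n + ε n := by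
    intro n
    have h1 : ((n : ℝ) + 1) * A (n + 1) = (n : ℝ) * A n + y n := by
      calc ((n : ℝ) + 1) * A (n + 1) = ((n + 1 : ℕ) : ℝ) * A (n + 1) := by push_cast; ring
      _ = ∑ k ∈ Finset.range (n + 1), y k := hmulA (n + 1)
      _ = ∑ k ∈ Finset.range n, y k + y n := Finset.sum_range_succ _ _
      _ = (n : ℝ) * A n + y n := by rw [hmulA n]
    have hyn : y n = ε n + q + a * A n := by simp only [hε]; ring
    simp only [he]
    rw [mul_sub, h1, hyn]
    linear_combination hqc
  have hestep : ∀ n : ℕ, 1 ≤ n →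
      |e (n + 1)| ≤ (((n : ℝ) + a) * |e n| + |ε n|) / ((n : ℝ) + 1) := by
    intro n hn
    have hn1 : (1 : ℝ) ≤ (n : ℝ) := by exact_mod_cast hn
    have hpos : (0 : ℝ) < (n : ℝ) + 1 := by linarith
    rw [le_div_iff₀ hpos]
    have habs : |((n : ℝ) + 1) * e (n + 1)| ≤ ((n : ℝ) + a) * |e n| + |ε n| := by
      rw [hrec n]
      refine (abs_add_le _ _).trans ?_
      rw [abs_mul, abs_of_nonneg (by linarith : (0:ℝ) ≤ (n : ℝ) + a)]
    calc |e (n + 1)| * ((n : ℝ) + 1) = |((n : ℝ) + 1) * e (n + 1)| := by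
          rw [abs_mul, abs_of_nonneg hpos.le]; ring
    _ ≤ _ := habs
  have he0 : Tendsto e atTop (𝓝 0) := by
    rw [Metric.tendsto_atTop]
    intro δ hδ
    set δ' : ℝ := δ / 2 with hδ'
    have hδ'pos : 0 < δ' := by positivity
    obtain ⟨N₀', hN₀'⟩ := (Metric.tendsto_atTop.mp hεt) ((1 - a) * δ' / 2) (by positivity)
    set N₀ : ℕ := max N₀' 1 with hN₀def
    have hN₀1 : 1 ≤ N₀ := le_max_right _ _
    have hεb : ∀ n, N₀ ≤ n → |ε n| ≤ (1 - a) * δ' / 2 := by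
      intro n hn
      have := hN₀' n (le_trans (le_max_left _ _) hn)
      rw [Real.dist_eq, sub_zero] at this
      exact this.le
    have hpers : ∀ n, N₀ ≤ n → |e n| ≤ δ' → |e (n + 1)| ≤ δ' := by
      intro n hn hen
      have hn1 : 1 ≤ n := le_trans hN₀1 hn
      have hn1' : (1 : ℝ) ≤ (n : ℝ) := by exact_mod_cast hn1
      have h1 := hestep n hn1
      have h2 := hεb n hn
      have hna : (0 : ℝ) ≤ (n : ℝ) + a := by linarith
      have hpos : (0 : ℝ) < (n : ℝ) + 1 := by linarith
      refine h1.trans ?_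
      rw [div_le_iff₀ hpos]
      nlinarith [abs_nonneg (e n)]
    have hentry : ∃ n, N₀ ≤ n ∧ |e n| ≤ δ' := by
      by_contra hcon
      push_neg at hcon
      have hdec : ∀ m : ℕ, |e (N₀ + m)| ≤
          |e N₀| - (1 - a) * δ' / 2 * ∑ j ∈ Finset.range m, ((N₀ : ℝ) + j + 1)⁻¹ := by
        intro m
        induction m with
        | zero => simp
        | succ m ih =>
          have hnN : N₀ ≤ N₀ + m := Nat.le_add_right _ _
          have hn1 : 1 ≤ N₀ + m := le_trans hN₀1 hnN
          have hn1' : (1 : ℝ) ≤ ((N₀ + m : ℕ) : ℝ) := by exact_mod_cast hn1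
          have hpos : (0 : ℝ) < ((N₀ + m : ℕ) : ℝ) + 1 := by linarith
          have h1 := hestep (N₀ + m) hn1
          have h2 := hεb (N₀ + m) hnN
          have h3 := hcon (N₀ + m) hnN
          have hna : (0 : ℝ) ≤ ((N₀ + m : ℕ) : ℝ) + a := by linarith
          have hinv : (((N₀ + m : ℕ) : ℝ) + 1) * (((N₀ + m : ℕ) : ℝ) + 1)⁻¹ = 1 :=
            mul_inv_cancel₀ hpos.ne'
          have hkey : |e (N₀ + m + 1)| ≤
              |e (N₀ + m)| - (1 - a) * δ' / 2 * (((N₀ + m : ℕ) : ℝ) + 1)⁻¹ := by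
            refine h1.trans ?_
            rw [div_le_iff₀ hpos]
            have hprod : (1 - a) * δ' < (1 - a) * |e (N₀ + m)| :=
              mul_lt_mul_of_pos_left h3 hβ
            have hCI : (1 - a) * δ' / 2 * (((N₀ + m : ℕ) : ℝ) + 1)⁻¹ * (((N₀ + m : ℕ) : ℝ) + 1)
                = (1 - a) * δ' / 2 := by
              field_simp
            nlinarith [hprod, hCI]
          have hsum : ∑ j ∈ Finset.range (m + 1), ((N₀ : ℝ) + j + 1)⁻¹
              = ∑ j ∈ Finset.range m, ((N₀ : ℝ) + j + 1)⁻¹ + (((N₀ + m : ℕ) : ℝ) + 1)⁻¹ := by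
            rw [Finset.sum_range_succ]
            push_cast
            ring_nf
          calc |e (N₀ + (m + 1))| = |e (N₀ + m + 1)| := by ring_nf
          _ ≤ |e (N₀ + m)| - (1 - a) * δ' / 2 * (((N₀ + m : ℕ) : ℝ) + 1)⁻¹ := hkey
          _ ≤ (|e N₀| - (1 - a) * δ' / 2 * ∑ j ∈ Finset.range m, ((N₀ : ℝ) + j + 1)⁻¹)
                - (1 - a) * δ' / 2 * (((N₀ + m : ℕ) : ℝ) + 1)⁻¹ := by linarith
          _ = |e N₀| - (1 - a) * δ' / 2 * ∑ j ∈ Finset.range (m + 1), ((N₀ : ℝ) + j + 1)⁻¹ := by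
                rw [hsum]; ring
      have hdiv : Tendsto (fun m : ℕ => ∑ j ∈ Finset.range m, ((N₀ : ℝ) + j + 1)⁻¹)
          atTop atTop := by
        have hcomp : ∀ m : ℕ, ((N₀ : ℝ) + 1)⁻¹ * ∑ j ∈ Finset.range m, (1 / ((j : ℝ) + 1))
            ≤ ∑ j ∈ Finset.range m, ((N₀ : ℝ) + j + 1)⁻¹ := by
          intro m
          rw [Finset.mul_sum]
          apply Finset.sum_le_sum
          intro j _
          have hj : (0 : ℝ) ≤ (j : ℝ) := Nat.cast_nonneg j
          have hN : (0 : ℝ) ≤ (N₀ : ℝ) := Nat.cast_nonneg _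
          have h1 : ((N₀ : ℝ) + j + 1) ≤ ((N₀ : ℝ) + 1) * ((j : ℝ) + 1) := by nlinarith
          calc ((N₀ : ℝ) + 1)⁻¹ * (1 / ((j : ℝ) + 1))
              = (((N₀ : ℝ) + 1) * ((j : ℝ) + 1))⁻¹ := by
                rw [one_div, mul_inv]
          _ ≤ ((N₀ : ℝ) + j + 1)⁻¹ := by
                apply inv_anti₀ (by positivity) h1
        apply tendsto_atTop_mono hcomp
        exact Tendsto.const_mul_atTop (by positivity)
          Real.tendsto_sum_range_one_div_nat_succ_atTop
      have hC : 0 < (1 - a) * δ' / 2 := by positivity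
      obtain ⟨m, hm⟩ := (hdiv.eventually_ge_atTop ((|e N₀| + 1) / ((1 - a) * δ' / 2))).exists
      rw [div_le_iff₀ hC] at hm
      have habs := abs_nonneg (e (N₀ + m))
      have := hdec m
      nlinarith
    obtain ⟨N₁, hN₁, hEN₁⟩ := hentry
    refine ⟨N₁, fun n hn => ?_⟩
    have hall : ∀ n, N₁ ≤ n → |e n| ≤ δ' := by
      intro n hn
      induction n, hn using Nat.le_induction with
      | base => exact hEN₁
      | succ n hn ih => exact hpers n (le_trans hN₁ hn) ih
    rw [Real.dist_eq, sub_zero]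
    calc |e n| ≤ δ' := hall n hn
    _ < δ := by rw [hδ']; linarith
  have hyt : Tendsto (fun n => ε n + (q + a * (e n + c))) atTop
      (𝓝 (0 + (q + a * (0 + c)))) := by
    exact hεt.add (tendsto_const_nhds.add
      (Tendsto.const_mul a (he0.add tendsto_const_nhds)))
  rw [zero_add, zero_add, hqc] at hyt
  apply hyt.congr
  intro n
  simp only [hε, he]
  ring


/-- For the minimal random walk with `α = p − q < 1/2`, `S_n/n → q/(1−α)` a.s. -/
theorem stmt_13 {Ω : Type*} {m0 : MeasurableSpace Ω} (μ : Measure Ω) [IsProbabilityMeasure μ]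
    (F : Filtration ℕ m0) (X S : ℕ → Ω → ℝ) (p q α : ℝ)
    (hp : p ∈ Set.Icc (0 : ℝ) 1) (hq : q ∈ Set.Ioc (0 : ℝ) 1) (hα : α = p - q)
    (hα2 : α < 1 / 2)
    (hX01 : ∀ n ω, X n ω = 0 ∨ X n ω = 1)
    (hS0 : ∀ ω, S 0 ω = 0)
    (hSrec : ∀ n ω, S (n + 1) ω = S n ω + X (n + 1) ω)
    (hXadapted : Adapted F X)
    (hcond : ∀ n, 1 ≤ n →
      μ[Set.indicator {ω' | X (n + 1) ω' = 1} (fun _ => (1 : ℝ)) | F n]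
        =ᵐ[μ] fun ω => q + α * S n ω / n) :
    ∀ᵐ ω ∂μ, Tendsto (fun n : ℕ => S n ω / n) atTop (nhds (q / (1 - α))) := by
  have hp0 : 0 ≤ p := hp.1
  have hp1 : p ≤ 1 := hp.2
  have hq0 : 0 < q := hq.1
  have hq1 : q ≤ 1 := hq.2
  have hα1 : -1 ≤ α := by rw [hα]; linarith
  have hαlt : α < 1 := lt_of_lt_of_le hα2 (by norm_num)
  have hX0 : ∀ n ω, 0 ≤ X n ω := by
    intro n ω; rcases hX01 n ω with h | h <;> rw [h] <;> norm_num
  have hX1 : ∀ n ω, X n ω ≤ 1 := by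
    intro n ω; rcases hX01 n ω with h | h <;> rw [h] <;> norm_num
  have hS_nonneg : ∀ n ω, 0 ≤ S n ω := by
    intro n
    induction n with
    | zero => intro ω; rw [hS0]
    | succ n ih => intro ω; rw [hSrec]; exact add_nonneg (ih ω) (hX0 _ ω)
  have hS_le : ∀ n ω, S n ω ≤ n := by
    intro n
    induction n with
    | zero => intro ω; rw [hS0]; norm_num
    | succ n ih =>
      intro ω; rw [hSrec]
      push_cast
      linarith [ih ω, hX1 (n + 1) ω]
  have hSm : ∀ n, StronglyMeasurable[F n] (S n) := by
    intro n
    induction n with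
    | zero =>
      have h0 : S 0 = fun _ => 0 := funext hS0
      rw [h0]; exact stronglyMeasurable_const
    | succ n ih =>
      have h0 : S (n + 1) = fun ω => S n ω + X (n + 1) ω := funext (hSrec n)
      rw [h0]
      exact (ih.mono (F.mono n.le_succ)).add (hXadapted (n + 1)).stronglyMeasurable
  -- helper: bounded measurable functions are integrable
  have hbddInt : ∀ (f : Ω → ℝ) (C : ℝ), StronglyMeasurable[m0] f → (∀ ω, |f ω| ≤ C) →
      Integrable f μ := by
    intro f C hf hC
    exact (memLp_top_of_bound hf.aestronglyMeasurable C
      (Eventually.of_forall (by simpa [Real.norm_eq_abs] using hC))).integrable le_top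
  -- the filtration shifted by one
  set G : Filtration ℕ m0 :=
    ⟨fun n => F (n + 1), fun i j hij => F.mono (Nat.succ_le_succ hij),
      fun n => F.le (n + 1)⟩ with hGdef
  set v : ℕ → Ω → ℝ :=
    fun k ω => ((k : ℝ) + 2)⁻¹ * (X (k + 2) ω - (q + α * S (k + 1) ω / ((k : ℝ) + 1)))
    with hv
  set M : ℕ → Ω → ℝ := fun n => ∑ k ∈ Finset.range n, v k with hM
  -- bounds for the conditional mean
  have hRmem : ∀ (k : ℕ) ω, 0 ≤ q + α * S (k + 1) ω / ((k : ℝ) + 1) ∧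
      q + α * S (k + 1) ω / ((k : ℝ) + 1) ≤ 1 := by
    intro k ω
    have h1 : 0 ≤ S (k + 1) ω := hS_nonneg _ _
    have h2 : S (k + 1) ω ≤ (k : ℝ) + 1 := by
      have := hS_le (k + 1) ω; push_cast at this; linarith
    have hk : (0 : ℝ) < (k : ℝ) + 1 := by positivity
    have hrw : α * S (k + 1) ω / ((k : ℝ) + 1) = α * (S (k + 1) ω / ((k : ℝ) + 1)) :=
      mul_div_assoc _ _ _
    have ht0 : 0 ≤ S (k + 1) ω / ((k : ℝ) + 1) := div_nonneg h1 hk.le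
    have ht1 : S (k + 1) ω / ((k : ℝ) + 1) ≤ 1 := by rw [div_le_one hk]; exact h2
    rw [hrw, hα]
    constructor <;> nlinarith
  have hvabs : ∀ (k : ℕ) ω, |v k ω| ≤ ((k : ℝ) + 2)⁻¹ := by
    intro k ω
    have h1 := hRmem k ω
    have hx0 := hX0 (k + 2) ω
    have hx1 := hX1 (k + 2) ω
    simp only [hv]
    rw [abs_mul, abs_of_nonneg (by positivity : (0:ℝ) ≤ ((k : ℝ) + 2)⁻¹)]
    have h2 : |X (k + 2) ω - (q + α * S (k + 1) ω / ((k : ℝ) + 1))| ≤ 1 :=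
      abs_le.mpr ⟨by linarith [h1.2], by linarith [h1.1]⟩
    calc ((k : ℝ) + 2)⁻¹ * |X (k + 2) ω - (q + α * S (k + 1) ω / ((k : ℝ) + 1))|
        ≤ ((k : ℝ) + 2)⁻¹ * 1 := by
          exact mul_le_mul_of_nonneg_left h2 (by positivity)
    _ = ((k : ℝ) + 2)⁻¹ := mul_one _
  -- measurability
  have hSMt : ∀ k : ℕ, StronglyMeasurable[F (k + 1)]
      (fun ω => q + α * S (k + 1) ω / ((k : ℝ) + 1)) := by
    intro k
    have h2 : StronglyMeasurable[F (k + 1)] (S (k + 1)) := hSm (k + 1)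
    have hmeas : Measurable[F (k + 1)] fun ω => q + α * S (k + 1) ω / ((k : ℝ) + 1) :=
      measurable_const.add ((h2.measurable.const_mul α).div_const _)
    exact hmeas.stronglyMeasurable
  have hvm : ∀ k, StronglyMeasurable[F (k + 2)] (v k) := by
    intro k
    have h1 : StronglyMeasurable[F (k + 2)] (X (k + 2)) := (hXadapted (k + 2)).stronglyMeasurable
    have h2 : StronglyMeasurable[F (k + 2)]
        (fun ω => q + α * S (k + 1) ω / ((k : ℝ) + 1)) :=
      (hSMt k).mono (F.mono (Nat.le_succ _))
    simp only [hv]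
    exact (h1.sub h2).const_mul _
  have hvint : ∀ k, Integrable (v k) μ :=
    fun k => hbddInt _ _ ((hvm k).mono (F.le _)) (fun ω => hvabs k ω)
  have hMm : ∀ n, StronglyMeasurable[F (n + 1)] (M n) := by
    intro n
    simp only [hM]
    refine Finset.stronglyMeasurable_sum _ fun k hk => ?_
    rw [Finset.mem_range] at hk
    exact (hvm k).mono (F.mono (by omega))
  have hMint : ∀ n, Integrable (M n) μ := by
    intro n
    simp only [hM]
    exact integrable_finset_sum' _ fun k _ => hvint k
  -- conditional expectation of X (k+2)
  have hXcond : ∀ k : ℕ, μ[X (k + 2) | F (k + 1)]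
      =ᵐ[μ] fun ω => q + α * S (k + 1) ω / ((k : ℝ) + 1) := by
    intro k
    have h0 := hcond (k + 1) (Nat.le_add_left 1 k)
    have hind : Set.indicator {ω' | X (k + 1 + 1) ω' = 1} (fun _ => (1 : ℝ)) = X (k + 2) := by
      funext ω
      rcases hX01 (k + 2) ω with h | h
      · have : ω ∉ {ω' | X (k + 1 + 1) ω' = 1} := by
          simp only [Set.mem_setOf_eq]
          rw [show (k + 1 + 1) = k + 2 from rfl, h]
          norm_num
        rw [Set.indicator_of_notMem this, h]
      · have : ω ∈ {ω' | X (k + 1 + 1) ω' = 1} := by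
          simp only [Set.mem_setOf_eq]
          rw [show (k + 1 + 1) = k + 2 from rfl, h]
        rw [Set.indicator_of_mem this, h]
    rw [hind] at h0
    refine h0.trans (EventuallyEq.of_eq (funext fun ω => ?_))
    push_cast
    ring
  -- conditional expectation of v k is 0
  have hcondv : ∀ k : ℕ, μ[v k | F (k + 1)] =ᵐ[μ] 0 := by
    intro k
    have hXint : Integrable (X (k + 2)) μ :=
      hbddInt _ 1 ((hXadapted (k + 2)).stronglyMeasurable.mono (F.le _))
        (fun ω => abs_le.mpr ⟨by linarith [hX0 (k + 2) ω], hX1 (k + 2) ω⟩)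
    have hRint : Integrable (fun ω => q + α * S (k + 1) ω / ((k : ℝ) + 1)) μ :=
      hbddInt _ 1 ((hSMt k).mono (F.le _))
        (fun ω => abs_le.mpr ⟨by linarith [(hRmem k ω).1], (hRmem k ω).2⟩)
    have h1 : v k = ((k : ℝ) + 2)⁻¹ •
        (X (k + 2) - fun ω => q + α * S (k + 1) ω / ((k : ℝ) + 1)) := by
      funext ω
      simp only [hv, Pi.smul_apply, Pi.sub_apply, smul_eq_mul]
    rw [h1]
    refine (condExp_smul (((k : ℝ) + 2)⁻¹)
      (X (k + 2) - fun ω => q + α * S (k + 1) ω / ((k : ℝ) + 1)) _).trans ?_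
    have h2 : μ[X (k + 2) - (fun ω => q + α * S (k + 1) ω / ((k : ℝ) + 1)) | F (k + 1)]
        =ᵐ[μ] 0 := by
      refine (condExp_sub hXint hRint _).trans ?_
      have h4 : μ[(fun ω => q + α * S (k + 1) ω / ((k : ℝ) + 1)) | F (k + 1)]
          = fun ω => q + α * S (k + 1) ω / ((k : ℝ) + 1) :=
        condExp_of_stronglyMeasurable (F.le (k + 1)) (hSMt k) hRint
      rw [h4]
      filter_upwards [hXcond k] with ω hω
      simp only [Pi.sub_apply, Pi.zero_apply, hω]
      ring
    filter_upwards [h2] with ω hω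
    simp only [Pi.smul_apply, hω, Pi.zero_apply, smul_eq_mul, mul_zero]
  -- M is a martingale w.r.t. G
  have hMadp : StronglyAdapted G M := fun n => hMm n
  have hmart : Martingale M G μ := by
    apply martingale_nat hMadp hMint
    intro n
    have h1 : M (n + 1) = M n + v n := by
      simp only [hM, Finset.sum_range_succ]
    refine EventuallyEq.symm ?_
    rw [h1]
    refine (condExp_add (hMint n) (hvint n) _).trans ?_
    have h2 : μ[M n | G n] = M n :=
      condExp_of_stronglyMeasurable (G.le n) (hMadp n) (hMint n)
    rw [h2]
    have h3 : μ[v n | (G n : MeasurableSpace Ω)] =ᵐ[μ] 0 := hcondv n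
    filter_upwards [h3] with ω hω
    simp only [Pi.add_apply, hω, Pi.zero_apply, add_zero]
  -- pointwise bound on M n
  have hMb : ∀ (n : ℕ) ω, |M n ω| ≤ (n : ℝ) := by
    intro n ω
    simp only [hM, Finset.sum_apply]
    calc |∑ k ∈ Finset.range n, v k ω| ≤ ∑ k ∈ Finset.range n, |v k ω| :=
          Finset.abs_sum_le_sum_abs _ _
    _ ≤ ∑ _k ∈ Finset.range n, (1 : ℝ) := by
          refine Finset.sum_le_sum fun k _ => (hvabs k ω).trans ?_
          rw [inv_le_one_iff₀]
          right; linarith [Nat.cast_nonneg (α := ℝ) k]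
    _ = (n : ℝ) := by simp
  have hMsm : ∀ n, StronglyMeasurable[m0] (M n) := fun n => (hMm n).mono (F.le _)
  have hMsq : ∀ n, Integrable (fun ω => (M n ω) ^ 2) μ := by
    intro n
    refine hbddInt _ ((n : ℝ) ^ 2) ?_ ?_
    · have : (fun ω => (M n ω) ^ 2) = M n * M n := funext fun ω => sq (M n ω)
      rw [this]
      exact (hMsm n).mul (hMsm n)
    · intro ω
      rw [abs_of_nonneg (sq_nonneg _), ← sq_abs]
      exact pow_le_pow_left₀ (abs_nonneg _) (hMb n ω) 2
  -- second moment bound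
  have hM2 : ∀ n, ∫ ω, (M n ω) ^ 2 ∂μ ≤ 1 - ((n : ℝ) + 1)⁻¹ := by
    intro n
    induction n with
    | zero =>
      have h0 : ∀ ω, (M 0 ω) ^ 2 = 0 := by
        intro ω; simp [hM]
      rw [integral_congr_ae (Eventually.of_forall h0)]
      simp
    | succ n ih =>
      have hvsm : StronglyMeasurable[m0] (v n) := (hvm n).mono (F.le _)
      have hint1 : Integrable (fun ω => M n ω * v n ω) μ := by
        refine hbddInt _ ((n : ℝ) * ((n : ℝ) + 2)⁻¹) ((hMsm n).mul hvsm) ?_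
        intro ω
        rw [abs_mul]
        exact mul_le_mul (hMb n ω) (hvabs n ω) (abs_nonneg _) (Nat.cast_nonneg n)
      have hint3 : Integrable (fun ω => (v n ω) ^ 2) μ := by
        refine hbddInt _ 1 ?_ ?_
        · have : (fun ω => (v n ω) ^ 2) = v n * v n := funext fun ω => sq (v n ω)
          rw [this]; exact hvsm.mul hvsm
        · intro ω
          rw [abs_of_nonneg (sq_nonneg _), ← sq_abs]
          calc |v n ω| ^ 2 ≤ 1 ^ 2 := by
                refine pow_le_pow_left₀ (abs_nonneg _) ((hvabs n ω).trans ?_) 2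
                rw [inv_le_one_iff₀]; right; linarith [Nat.cast_nonneg (α := ℝ) n]
          _ = 1 := one_pow 2
      have hcross : ∫ ω, M n ω * v n ω ∂μ = 0 := by
        have hpull : μ[M n * v n | F (n + 1)] =ᵐ[μ] M n * μ[v n | F (n + 1)] :=
          condExp_mul_of_stronglyMeasurable_left (hMm n) hint1 (hvint n)
        have h0 : μ[M n * v n | F (n + 1)] =ᵐ[μ] 0 := by
          refine hpull.trans ?_
          filter_upwards [hcondv n] with ω hω
          simp only [Pi.mul_apply, hω, Pi.zero_apply, mul_zero]
        have hc2 : ∫ ω, (M n * v n) ω ∂μ = 0 := by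
          calc ∫ ω, (M n * v n) ω ∂μ = ∫ ω, (μ[M n * v n | F (n + 1)]) ω ∂μ :=
                (integral_condExp (F.le (n + 1))).symm
          _ = ∫ _ω, (0 : ℝ) ∂μ := integral_congr_ae h0
          _ = 0 := integral_zero _ _
        simpa [Pi.mul_apply] using hc2
      have hv2 : ∫ ω, (v n ω) ^ 2 ∂μ ≤ ((n : ℝ) + 1)⁻¹ - ((n : ℝ) + 2)⁻¹ := by
        have hb : ∀ ω, (v n ω) ^ 2 ≤ (((n : ℝ) + 2)⁻¹) ^ 2 := fun ω => by
          rw [← sq_abs]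
          exact pow_le_pow_left₀ (abs_nonneg _) (hvabs n ω) 2
        have h1 : ∫ ω, (v n ω) ^ 2 ∂μ ≤ ∫ _ω, (((n : ℝ) + 2)⁻¹) ^ 2 ∂μ :=
          integral_mono hint3 (integrable_const _) hb
        have h2 : ∫ _ω, (((n : ℝ) + 2)⁻¹) ^ 2 ∂μ = (((n : ℝ) + 2)⁻¹) ^ 2 := by
          simp
        have h3 : ((n : ℝ) + 1)⁻¹ - ((n : ℝ) + 2)⁻¹ = (((n : ℝ) + 1) * ((n : ℝ) + 2))⁻¹ := by
          rw [inv_sub_inv (by positivity) (by positivity)]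
          ring_nf
        have h4 : (((n : ℝ) + 2)⁻¹) ^ 2 ≤ (((n : ℝ) + 1) * ((n : ℝ) + 2))⁻¹ := by
          rw [inv_pow]
          apply inv_anti₀ (by positivity)
          nlinarith [Nat.cast_nonneg (α := ℝ) n]
        rw [h3]
        linarith [h1, h2.le]
      have h1 : ∀ ω, (M (n + 1) ω) ^ 2 =
          (M n ω) ^ 2 + 2 * (M n ω * v n ω) + (v n ω) ^ 2 := by
        intro ω
        have hstep : M (n + 1) ω = M n ω + v n ω := by
          simp [hM, Finset.sum_range_succ]
        rw [hstep]; ring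
      have hsplit : ∫ ω, (M (n + 1) ω) ^ 2 ∂μ =
          ∫ ω, (M n ω) ^ 2 ∂μ + 2 * ∫ ω, M n ω * v n ω ∂μ + ∫ ω, (v n ω) ^ 2 ∂μ := by
        have hint4 : Integrable (fun ω => 2 * (M n ω * v n ω)) μ := hint1.const_mul 2
        have hint12 : Integrable (fun ω => M n ω ^ 2 + 2 * (M n ω * v n ω)) μ :=
          (hMsq n).add hint4
        rw [integral_congr_ae (Eventually.of_forall h1)]
        rw [integral_add hint12 hint3, integral_add (hMsq n) hint4, integral_const_mul]
      rw [hsplit, hcross]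
      have hcast : ((n + 1 : ℕ) : ℝ) + 1 = (n : ℝ) + 2 := by push_cast; ring
      rw [hcast]
      linarith [hv2, ih]
  -- L1 bound
  have hL1 : ∀ n, eLpNorm (M n) 1 μ ≤ ((1 : NNReal) : ENNReal) := by
    intro n
    have habs : Integrable (fun ω => |M n ω|) μ := (hMint n).abs
    have hhalf : Integrable (fun ω => (1 + (M n ω) ^ 2) / 2) μ :=
      ((integrable_const 1).add (hMsq n)).div_const 2
    have h1 : ∫ ω, |M n ω| ∂μ ≤ 1 := by
      have hptw : ∀ ω, |M n ω| ≤ (1 + (M n ω) ^ 2) / 2 := by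
        intro ω
        nlinarith [sq_nonneg (|M n ω| - 1), sq_abs (M n ω)]
      calc ∫ ω, |M n ω| ∂μ ≤ ∫ ω, (1 + (M n ω) ^ 2) / 2 ∂μ :=
            integral_mono habs hhalf hptw
      _ = (∫ ω, (1 + (M n ω) ^ 2) ∂μ) / 2 := integral_div _ _
      _ = (1 + ∫ ω, (M n ω) ^ 2 ∂μ) / 2 := by
            rw [integral_add (integrable_const 1) (hMsq n)]
            simp
      _ ≤ 1 := by
            have := hM2 n
            have h0 : (0:ℝ) ≤ ((n : ℝ) + 1)⁻¹ := by positivity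
            linarith
    calc eLpNorm (M n) 1 μ = ∫⁻ ω, ‖M n ω‖ₑ ∂μ := eLpNorm_one_eq_lintegral_enorm
    _ = ENNReal.ofReal (∫ ω, ‖M n ω‖ ∂μ) :=
        (ofReal_integral_norm_eq_lintegral_enorm (hMint n)).symm
    _ ≤ ((1 : NNReal) : ENNReal) := by
        rw [show (((1 : NNReal)) : ENNReal) = ENNReal.ofReal 1 from by simp]
        apply ENNReal.ofReal_le_ofReal
        simpa [Real.norm_eq_abs] using h1
  -- almost sure convergence of M
  have hae := hmart.submartingale.exists_ae_tendsto_of_bdd hL1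
  filter_upwards [hae] with ω hω
  obtain ⟨L, hL⟩ := hω
  have hLsum : Tendsto (fun n => ∑ k ∈ Finset.range n, v k ω) atTop (𝓝 L) := by
    refine hL.congr fun n => ?_
    simp [hM, Finset.sum_apply]
  have hK := mrw_kronecker hLsum
  set y : ℕ → ℝ := fun n => S (n + 1) ω / ((n : ℝ) + 1) with hy
  have hDk : ∀ k : ℕ, ((k : ℝ) + 2) * v k ω = X (k + 2) ω - (q + α * y k) := by
    intro k
    simp only [hv, hy]
    rw [← mul_assoc, mul_inv_cancel₀ (by positivity : ((k : ℝ) + 2) ≠ 0), one_mul,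
      mul_div_assoc]
  have hsumX : ∀ n : ℕ, ∑ k ∈ Finset.range n, X (k + 2) ω = S (n + 1) ω - S 1 ω := by
    intro n
    induction n with
    | zero => simp
    | succ n ih =>
      rw [Finset.sum_range_succ, ih, hSrec (n + 1)]
      ring_nf
  have hq' : ∀ n : ℕ, 1 ≤ n → (n : ℝ)⁻¹ * ∑ k ∈ Finset.range n, ((k : ℝ) + 2) * v k ω
      = (S (n + 1) ω - S 1 ω) / n - q - α * ((n : ℝ)⁻¹ * ∑ k ∈ Finset.range n, y k) := by
    intro n hn
    have hn0 : (n : ℝ) ≠ 0 := Nat.cast_ne_zero.mpr (by omega)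
    rw [Finset.sum_congr rfl (fun k _ => hDk k)]
    have h2 : ∑ k ∈ Finset.range n, (X (k + 2) ω - (q + α * y k))
        = (S (n + 1) ω - S 1 ω) - ((n : ℝ) * q + α * ∑ k ∈ Finset.range n, y k) := by
      rw [Finset.sum_sub_distrib, hsumX n, Finset.sum_add_distrib, Finset.sum_const,
        Finset.card_range, ← Finset.mul_sum, nsmul_eq_mul]
    rw [h2]
    field_simp
    ring
  have hyb0 : ∀ n, 0 ≤ y n := fun n => div_nonneg (hS_nonneg _ _) (by positivity)
  have hyb1 : ∀ n, y n ≤ 1 := by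
    intro n
    simp only [hy]
    rw [div_le_one (by positivity)]
    have := hS_le (n + 1) ω
    push_cast at this
    linarith
  have hcorr : Tendsto (fun n : ℕ => y n - (S (n + 1) ω - S 1 ω) / n) atTop (𝓝 0) := by
    apply squeeze_zero_norm' (a := fun n : ℕ => (|S 1 ω| + 1) * (n : ℝ)⁻¹)
    · filter_upwards [eventually_ge_atTop 1] with n hn
      have hn1 : (1 : ℝ) ≤ (n : ℝ) := by exact_mod_cast hn
      have hnpos : (0 : ℝ) < n := by linarith
      have hs1 : y n - (S (n + 1) ω - S 1 ω) / n = (S 1 ω - y n) / n := by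
        simp only [hy]
        field_simp
        ring
      rw [Real.norm_eq_abs, hs1, abs_div, abs_of_pos hnpos, div_eq_mul_inv]
      have h5 : |S 1 ω - y n| ≤ |S 1 ω| + 1 := by
        refine (abs_sub _ _).trans ?_
        have : |y n| ≤ 1 := abs_le.mpr ⟨by linarith [hyb0 n], hyb1 n⟩
        linarith
      exact mul_le_mul_of_nonneg_right h5 (by positivity)
    · have h6 : Tendsto (fun n : ℕ => (|S 1 ω| + 1) * (n : ℝ)⁻¹) atTop
          (𝓝 ((|S 1 ω| + 1) * 0)) :=
        tendsto_const_nhds.mul tendsto_inv_atTop_nhds_zero_nat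
      simpa using h6
  have hdet_in : Tendsto
      (fun n : ℕ => y n - q - α * ((n : ℝ)⁻¹ * ∑ k ∈ Finset.range n, y k)) atTop (𝓝 0) := by
    have hsum0 := hK.add hcorr
    rw [add_zero] at hsum0
    apply hsum0.congr'
    filter_upwards [eventually_ge_atTop 1] with n hn
    rw [hq' n hn]
    ring
  have hylim : Tendsto y atTop (𝓝 (q / (1 - α))) := mrw_det hα1 hαlt hyb0 hyb1 hdet_in
  refine (tendsto_add_atTop_iff_nat 1).mp ?_
  refine hylim.congr fun n => ?_
  simp only [hy]
  push_cast
  ring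
end
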